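/- arXiv:1205.2819 — 7 statements merged into one kernel-verified Lean document; each statement's English description precedes it below -/
import Mathlib

section
/- Let H be a normal subgroup of a group G and let K be a subgroup of G commensurable with H. If L is a length function on G with L(k)=0 for all k ∈ K, then there exists a length function L′ on G equivalent to L such that L′ vanishes on both H and K. -/
noncomputable section

namespace HeckeRDPaper

/-- The conjugate subgroup `gHg⁻¹`. -/
def conjS {G : Type*} [Group G] (g : G) (H : Subgroup G) : Subgroup G :=
  Subgroup.map (MulAut.conj g).toMonoidHom H

/-- `H` is an almost normal subgroup of `G`: the index `|H : H ∩ gHg⁻¹|` is finite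
for every `g ∈ G`. -/
def AlmostNormal {G : Type*} [Group G] (H : Subgroup G) : Prop :=
  ∀ g : G, (conjS g H).relIndex H ≠ 0

/-- `H` and `K` are strongly commensurable: `H ∩ K` has finite index in both `H` and `K`. -/
def StronglyCommensurable {G : Type*} [Group G] (H K : Subgroup G) : Prop :=
  (H ⊓ K).relIndex H ≠ 0 ∧ (H ⊓ K).relIndex K ≠ 0

/-- `H` and `K` are commensurable: `H` and `gKg⁻¹` are strongly commensurable
for some `g ∈ G`. -/
def Commens {G : Type*} [Group G] (H K : Subgroup G) : Prop :=
  ∃ g : G, StronglyCommensurable H (conjS g K)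

/-- A length function on a group `G`. -/
structure IsLengthFunction {G : Type*} [Group G] (L : G → ℝ) : Prop where
  nonneg : ∀ g, 0 ≤ L g
  map_one : L 1 = 0
  map_inv : ∀ g, L g⁻¹ = L g
  subadd : ∀ g h, L (g * h) ≤ L g + L h

/-- A length function on the Hecke pair `(G, H)`: a length function on `G`
vanishing on `H`. -/
def IsHeckeLength {G : Type*} [Group G] (H : Subgroup G) (L : G → ℝ) : Prop :=
  IsLengthFunction L ∧ ∀ h ∈ H, L h = 0

/-- `L₁` dominates `L₂` if `L₂ ≤ a L₁ + b` for some positive constants `a`, `b`. -/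
def Dominates {G : Type*} [Group G] (L₁ L₂ : G → ℝ) : Prop :=
  ∃ a b : ℝ, 0 < a ∧ 0 < b ∧ ∀ g, L₂ g ≤ a * L₁ g + b

/-- Two length functions are equivalent if they dominate each other. -/
def EquivLen {G : Type*} [Group G] (L₁ L₂ : G → ℝ) : Prop :=
  Dominates L₁ L₂ ∧ Dominates L₂ L₁

/-- The set `H\G` of right cosets of `H` in `G`. -/
abbrev RCos {G : Type*} [Group G] (H : Subgroup G) := Quotient (QuotientGroup.rightRel H)

/-- The `ℓ²`-norm over the right cosets `H\G` of a (left `H`-invariant) function on `G`,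
computed using the set of representatives given by `Quotient.out`. -/
def l2 {G : Type*} [Group G] (H : Subgroup G) (f : G → ℝ) : ℝ :=
  Real.sqrt (∑' x : RCos H, f x.out ^ 2)

/-- The convolution `(f∗k)(g) = Σ_{x ∈ ⟨H\G⟩} f(gx⁻¹) k(x)`, the sum being over the
set of representatives of the right cosets of `H` given by `Quotient.out`. -/
def conv {G : Type*} [Group G] (H : Subgroup G) (f k : G → ℝ) : G → ℝ :=
  fun g => ∑' x : RCos H, f (g * x.out⁻¹) * k x.out

/-- `f` is supported on finitely many double cosets of `H`. -/
def FinDosetSupp {G : Type*} [Group G] (H : Subgroup G) (f : G → ℝ) : Prop :=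
  {s : Set G | ∃ g : G, f g ≠ 0 ∧
    s = {y : G | ∃ h₁ ∈ H, ∃ h₂ ∈ H, y = h₁ * g * h₂}}.Finite

/-- The Hecke pair `(G, H)` has property (RD) with respect to the length function `L`:
there is a polynomial `P` such that `‖f∗k‖₂ ≤ P(r) ‖f‖₂ ‖k‖₂` for every `r > 0`,
every nonnegative `H`-bi-invariant `f` supported on finitely many double cosets and
with `L ≤ r` on its support, and every nonnegative left-`H`-invariant square-summable `k`. -/
def HeckeRDwrt {G : Type*} [Group G] (H : Subgroup G) (L : G → ℝ) : Prop :=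
  ∃ P : Polynomial ℝ, ∀ r : ℝ, 0 < r → ∀ f k : G → ℝ,
    (∀ g, 0 ≤ f g) →
    (∀ g : G, ∀ h₁ ∈ H, ∀ h₂ ∈ H, f (h₁ * g * h₂) = f g) →
    FinDosetSupp H f →
    (∀ g, f g ≠ 0 → L g ≤ r) →
    (∀ g, 0 ≤ k g) →
    (∀ g : G, ∀ h ∈ H, k (h * g) = k g) →
    Summable (fun x : RCos H => k x.out ^ 2) →
    l2 H (conv H f k) ≤ P.eval r * l2 H f * l2 H k

/-- The Hecke pair `(G, H)` has property (RD): it has property (RD) with respect to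
some length function on `(G, H)`. -/
def HeckeRD {G : Type*} [Group G] (H : Subgroup G) : Prop :=
  ∃ L : G → ℝ, IsHeckeLength H L ∧ HeckeRDwrt H L

/-- A group has property (RD) with respect to `L` if the Hecke pair `(Γ, {1})` does. -/
def GroupRDwrt (Γ : Type*) [Group Γ] (L : Γ → ℝ) : Prop :=
  HeckeRDwrt (⊥ : Subgroup Γ) L

/-- A group has property (RD) if the Hecke pair `(Γ, {1})` does. -/
def GroupRD (Γ : Type*) [Group Γ] : Prop :=
  HeckeRD (⊥ : Subgroup Γ)

/-- A set-theoretic cross-section `σ : E/N → E` of the quotient map which is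
consistent with the Hecke pair `(·, H)`, i.e. `π ∘ σ = id`, `σ(1) = 1` and
`σ(x) H σ(x)⁻¹ = H` for all `x ∈ E/N`. -/
def ConsistentSection {E : Type*} [Group E] (N : Subgroup E) [N.Normal] (H : Subgroup E)
    (σ : E ⧸ N → E) : Prop :=
  (∀ x : E ⧸ N, (QuotientGroup.mk (σ x) : E ⧸ N) = x) ∧ σ 1 = 1 ∧
    ∀ x : E ⧸ N, ∀ h : E, h ∈ H ↔ σ x * h * (σ x)⁻¹ ∈ H

end HeckeRDPaper

open HeckeRDPaper in
/-- If `H` is normal, `K` is commensurable with `H`, and `L` is a length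
function vanishing on `K`, then there is an equivalent length function `L'` vanishing
on both `H` and `K`. -/
theorem stmt1 {G : Type*} [Group G] (H K : Subgroup G) [H.Normal]
    (hcomm : Commens H K)
    (L : G → ℝ) (hL : IsLengthFunction L) (hLK : ∀ k ∈ K, L k = 0) :
    ∃ L' : G → ℝ, IsLengthFunction L' ∧ EquivLen L L' ∧
      (∀ h ∈ H, L' h = 0) ∧ (∀ k ∈ K, L' k = 0) := by
  classical
  -- set up the conjugate subgroup on which L is bounded by 2 * L g₀
  obtain ⟨g₀, hfin, -⟩ := hcomm
  have hconj : ∀ x ∈ conjS g₀ K, L x ≤ 2 * L g₀ := by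
    rintro x hx
    obtain ⟨k, hk, rfl⟩ := hx
    have : (MulAut.conj g₀).toMonoidHom k = g₀ * k * g₀⁻¹ := rfl
    rw [this]
    calc L (g₀ * k * g₀⁻¹) ≤ L (g₀ * k) + L g₀⁻¹ := hL.subadd _ _
      _ ≤ L g₀ + L k + L g₀⁻¹ := by linarith [hL.subadd g₀ k]
      _ = 2 * L g₀ := by rw [hLK k hk, hL.map_inv]; ring
  -- L is bounded on H
  have hfinQ : Finite (H ⧸ (H ⊓ conjS g₀ K).subgroupOf H) := by
    rw [Subgroup.relIndex] at hfin
    have := Nat.card_ne_zero.mp hfin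
    exact this.2
  obtain ⟨B, hB⟩ : ∃ B : ℝ, ∀ q : H ⧸ (H ⊓ conjS g₀ K).subgroupOf H,
      L ((Quotient.out q : H) : G) ≤ B := by
    obtain ⟨B, hB⟩ := (Set.finite_range
      (fun q : H ⧸ (H ⊓ conjS g₀ K).subgroupOf H =>
        L ((Quotient.out q : H) : G))).bddAbove
    exact ⟨B, fun q => hB ⟨q, rfl⟩⟩
  obtain ⟨C, hC0, hC⟩ : ∃ C : ℝ, 0 ≤ C ∧ ∀ h ∈ H, L h ≤ C := by
    refine ⟨max (B + 2 * L g₀) 0, le_max_right _ _, fun h hh => ?_⟩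
    set h' : H := ⟨h, hh⟩
    set q : H ⧸ (H ⊓ conjS g₀ K).subgroupOf H := QuotientGroup.mk h'
    set r : H := Quotient.out q
    have hr : (QuotientGroup.mk r : H ⧸ (H ⊓ conjS g₀ K).subgroupOf H) = QuotientGroup.mk h' :=
      Quotient.out_eq q
    have hmem : r⁻¹ * h' ∈ (H ⊓ conjS g₀ K).subgroupOf H := (QuotientGroup.eq).mp hr
    have hmem' : ((r⁻¹ * h' : H) : G) ∈ H ⊓ conjS g₀ K := hmem
    have h2 : L ((r⁻¹ * h' : H) : G) ≤ 2 * L g₀ := hconj _ hmem'.2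
    have hdecomp : h = (r : G) * ((r⁻¹ * h' : H) : G) := by
      push_cast
      group
      rfl
    have : L h ≤ L (r : G) + L ((r⁻¹ * h' : H) : G) := by
      rw [hdecomp]; exact hL.subadd _ _
    have := this.trans (add_le_add (hB q) h2)
    exact this.trans (le_max_left _ _)
  -- define L'
  set S : G → Set ℝ := fun g => Set.range (fun h : H => L ((h : G) * g)) with hS
  have hSne : ∀ g, (S g).Nonempty := fun g => ⟨L ((1 : H) * g), ⟨1, rfl⟩⟩
  have hSbdd : ∀ g, BddBelow (S g) := by
    intro g
    refine ⟨0, ?_⟩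
    rintro x ⟨h, rfl⟩
    exact hL.nonneg _
  set L' : G → ℝ := fun g => sInf (S g) with hL'
  have hle : ∀ g (h : H), L' g ≤ L ((h : G) * g) := fun g h => csInf_le (hSbdd g) ⟨h, rfl⟩
  have hnn : ∀ g, 0 ≤ L' g := by
    intro g
    refine le_csInf (hSne g) ?_
    rintro x ⟨h, rfl⟩
    exact hL.nonneg _
  have hleL : ∀ g, L' g ≤ L g := by
    intro g
    have := hle g 1
    simpa using this
  -- lower bound: L g ≤ L' g + C
  have hlb : ∀ g, L g ≤ L' g + C := by
    intro g
    have : L g - C ≤ L' g := by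
      refine le_csInf (hSne g) ?_
      rintro x ⟨h, rfl⟩
      have h1 : L g ≤ L ((h : G)⁻¹) + L ((h : G) * g) := by
        have := hL.subadd ((h : G)⁻¹) ((h : G) * g)
        simpa [mul_assoc] using this
      have h2 : L ((h : G)⁻¹) ≤ C := by
        rw [hL.map_inv]; exact hC h h.2
      linarith
    linarith
  -- symmetry
  have hinvle : ∀ g, L' g⁻¹ ≤ L' g := by
    intro g
    refine le_csInf (hSne g) ?_
    rintro x ⟨h, rfl⟩
    have hmem : g⁻¹ * (h : G)⁻¹ * g ∈ H := by
      have := Subgroup.Normal.conj_mem ‹H.Normal› ((h : G)⁻¹) (H.inv_mem h.2) g⁻¹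
      simpa using this
    have h3 := hle g⁻¹ (⟨g⁻¹ * (h : G)⁻¹ * g, hmem⟩ : H)
    have heq : (g⁻¹ * (h : G)⁻¹ * g) * g⁻¹ = ((h : G) * g)⁻¹ := by group
    simp only [Subgroup.coe_mk] at h3
    rw [heq, hL.map_inv] at h3
    exact h3
  have hinv : ∀ g, L' g⁻¹ = L' g := by
    intro g
    refine le_antisymm (hinvle g) ?_
    have := hinvle g⁻¹
    simpa using this
  -- map_one
  have hone : L' 1 = 0 := le_antisymm (by simpa [hL.map_one] using hleL 1) (hnn 1)
  -- subadditivity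
  have hsub : ∀ g₁ g₂, L' (g₁ * g₂) ≤ L' g₁ + L' g₂ := by
    intro g₁ g₂
    refine le_of_forall_pos_le_add ?_
    intro ε hε
    obtain ⟨x₁, ⟨h₁, rfl⟩, hx₁⟩ := exists_lt_of_csInf_lt (hSne g₁)
      (show sInf (S g₁) < L' g₁ + ε / 2 by change L' g₁ < L' g₁ + ε / 2; linarith)
    obtain ⟨x₂, ⟨h₂, rfl⟩, hx₂⟩ := exists_lt_of_csInf_lt (hSne g₂)
      (show sInf (S g₂) < L' g₂ + ε / 2 by change L' g₂ < L' g₂ + ε / 2; linarith)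
    have hmem : (h₁ : G) * (g₁ * (h₂ : G) * g₁⁻¹) ∈ H :=
      H.mul_mem h₁.2 (Subgroup.Normal.conj_mem ‹H.Normal› _ h₂.2 g₁)
    have h3 := hle (g₁ * g₂) (⟨(h₁ : G) * (g₁ * (h₂ : G) * g₁⁻¹), hmem⟩ : H)
    have heq : ((h₁ : G) * (g₁ * (h₂ : G) * g₁⁻¹)) * (g₁ * g₂)
        = ((h₁ : G) * g₁) * ((h₂ : G) * g₂) := by group
    rw [heq] at h3
    have h4 := hL.subadd ((h₁ : G) * g₁) ((h₂ : G) * g₂)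
    linarith
  refine ⟨L', ⟨hnn, hone, hinv, hsub⟩, ⟨⟨1, 1, one_pos, one_pos, fun g => by
      have := hleL g; linarith⟩, ⟨1, C + 1, one_pos, by linarith, fun g => by
      have := hlb g; linarith⟩⟩, ?_, ?_⟩
  · intro h hh
    refine le_antisymm ?_ (hnn h)
    have := hle h (⟨h⁻¹, H.inv_mem hh⟩ : H)
    simpa [hL.map_one] using this
  · intro k hk
    refine le_antisymm ?_ (hnn k)
    have := hleL k
    rw [hLK k hk] at this
    exact this
end
end

section
/- Let H be a normal subgroup of a group G and let K be a subgroup of G commensurable with H. If L is a length function on G with L(h)=0 for all h ∈ H, then there exists a length function L′ on G equivalent to L such that L′ vanishes on both H and K. -/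
noncomputable section

open HeckeRDPaper in
/-- If `H` is normal, `K` is commensurable with `H`, and `L` is a length
function vanishing on `H`, then there is an equivalent length function `L'` vanishing
on both `H` and `K`. -/
theorem stmt2 {G : Type*} [Group G] (H K : Subgroup G) [H.Normal]
    (hcomm : Commens H K)
    (L : G → ℝ) (hL : IsLengthFunction L) (hLH : ∀ h ∈ H, L h = 0) :
    ∃ L' : G → ℝ, IsLengthFunction L' ∧ EquivLen L L' ∧
      (∀ h ∈ H, L' h = 0) ∧ (∀ k ∈ K, L' k = 0) := by
  classical
  obtain ⟨g, _, hc2⟩ := hcomm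
  -- Transport the finite-index hypothesis back through conjugation by `g`.
  have conj_relIndex : ∀ (A B : Subgroup G),
      (A.map (MulAut.conj g).toMonoidHom).relIndex (B.map (MulAut.conj g).toMonoidHom)
        = A.relIndex B := by
    intro A B
    rw [Subgroup.map_equiv_eq_comap_symm' (MulAut.conj g) A, Subgroup.relIndex_comap,
      Subgroup.map_map]
    congr 1
    ext x; simp
  have hmapH : H.map (MulAut.conj g).toMonoidHom = H := by
    ext x
    simp only [Subgroup.mem_map, MulEquiv.coe_toMonoidHom, MulAut.conj_apply]
    constructor
    · rintro ⟨y, hy, rfl⟩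
      exact Subgroup.Normal.conj_mem ‹H.Normal› y hy g
    · intro hx
      refine ⟨g⁻¹ * x * g, ?_, by group⟩
      simpa using Subgroup.Normal.conj_mem ‹H.Normal› x hx g⁻¹
  have hmapinf : (H ⊓ K).map (MulAut.conj g).toMonoidHom = H ⊓ conjS g K := by
    rw [Subgroup.map_inf _ _ _ (MulAut.conj g).injective, hmapH]
    rfl
  have key : (H ⊓ K).relIndex K ≠ 0 := by
    rw [← conj_relIndex (H ⊓ K) K, hmapinf]
    exact hc2
  -- Finitely many cosets of `H ⊓ K` in `K`.
  set J : Subgroup K := (H ⊓ K).subgroupOf K with hJdef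
  have hJ : J.index ≠ 0 := key
  have hfin : Finite (K ⧸ J) := by
    rw [Subgroup.index_eq_card] at hJ
    exact (Nat.card_ne_zero.mp hJ).2
  haveI := hfin
  haveI : Fintype (K ⧸ J) := Fintype.ofFinite _
  -- The finite set of representatives.
  set S : Finset G :=
    insert (1 : G) (Finset.image (fun q : K ⧸ J => ((Quotient.out q : K) : G)) Finset.univ)
    with hSdef
  have h1S : (1 : G) ∈ S := Finset.mem_insert_self _ _
  have hS : S.Nonempty := ⟨1, h1S⟩
  have hSK : ∀ s ∈ S, s ∈ K := by
    intro s hs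
    rcases Finset.mem_insert.mp hs with h | h
    · subst h; exact K.one_mem
    · obtain ⟨q, _, rfl⟩ := Finset.mem_image.mp h
      exact (Quotient.out q).2
  have hrep : ∀ k ∈ K, ∃ t ∈ S, t⁻¹ * k ∈ H := by
    intro k hk
    set q : K ⧸ J := QuotientGroup.mk (⟨k, hk⟩ : K) with hq
    refine ⟨((Quotient.out q : K) : G), ?_, ?_⟩
    · exact Finset.mem_insert_of_mem (Finset.mem_image_of_mem _ (Finset.mem_univ q))
    · have hout : (QuotientGroup.mk (Quotient.out q) : K ⧸ J) = QuotientGroup.mk (⟨k, hk⟩ : K) := by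
        rw [← hq]; exact Quotient.out_eq q
      have hmem : (Quotient.out q)⁻¹ * (⟨k, hk⟩ : K) ∈ J := QuotientGroup.eq.mp hout
      have : (((Quotient.out q)⁻¹ * (⟨k, hk⟩ : K) : K) : G) ∈ H ⊓ K :=
        Subgroup.mem_subgroupOf.mp hmem
      exact this.1
  -- The constant `C`.
  set C : ℝ := S.sup' hS L with hCdef
  have hC : ∀ s ∈ S, L s ≤ C := fun s hs => Finset.le_sup' L hs
  have hC0 : 0 ≤ C := hL.map_one ▸ hC 1 h1S
  -- The two halves of the Hausdorff-type length.
  set A : G → ℝ := fun x => S.sup' hS (fun s => S.inf' hS (fun t => L (s⁻¹ * x * t))) with hAdef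
  set B : G → ℝ := fun x => S.sup' hS (fun t => S.inf' hS (fun s => L (s⁻¹ * x * t))) with hBdef
  have hinf_nonneg : ∀ x : G, ∀ s : G, (0 : ℝ) ≤ S.inf' hS (fun t => L (s⁻¹ * x * t)) :=
    fun x s => Finset.le_inf' hS _ (fun t _ => hL.nonneg _)
  have hA_nonneg : ∀ x, 0 ≤ A x := by
    intro x
    simp only [hAdef]
    exact le_trans (hinf_nonneg x 1)
      (Finset.le_sup' (fun s => S.inf' hS fun t => L (s⁻¹ * x * t)) h1S)
  have hB_nonneg : ∀ x, 0 ≤ B x := by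
    intro x
    simp only [hBdef]
    refine le_trans ?_ (Finset.le_sup' (fun t => S.inf' hS (fun s => L (s⁻¹ * x * t))) h1S)
    exact Finset.le_inf' hS _ (fun s _ => hL.nonneg _)
  -- Vanishing criteria.
  have hA0 : ∀ x : G, (∀ s ∈ S, ∃ t ∈ S, s⁻¹ * x * t ∈ H) → A x = 0 := by
    intro x hx
    refine le_antisymm ?_ (hA_nonneg x)
    simp only [hAdef]
    refine Finset.sup'_le hS _ ?_
    intro s hs
    obtain ⟨t, ht, hmem⟩ := hx s hs
    calc S.inf' hS (fun t => L (s⁻¹ * x * t)) ≤ L (s⁻¹ * x * t) := Finset.inf'_le _ ht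
      _ = 0 := hLH _ hmem
  have hB0 : ∀ x : G, (∀ t ∈ S, ∃ s ∈ S, s⁻¹ * x * t ∈ H) → B x = 0 := by
    intro x hx
    refine le_antisymm ?_ (hB_nonneg x)
    simp only [hBdef]
    refine Finset.sup'_le hS _ ?_
    intro t ht
    obtain ⟨s, hs, hmem⟩ := hx t ht
    calc S.inf' hS (fun s => L (s⁻¹ * x * t)) ≤ L (s⁻¹ * x * t) := Finset.inf'_le _ hs
      _ = 0 := hLH _ hmem
  -- Symmetry.
  have hAB : ∀ x : G, A x⁻¹ = B x := by
    intro x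
    simp only [hAdef, hBdef]
    refine Finset.sup'_congr hS rfl ?_
    intro a _
    refine Finset.inf'_congr hS rfl ?_
    intro b _
    rw [← hL.map_inv (b⁻¹ * x * a)]
    congr 1
    group
  -- Subadditivity.
  have hA_sub : ∀ x y : G, A (x * y) ≤ A x + A y := by
    intro x y
    simp only [hAdef]
    refine Finset.sup'_le hS _ ?_
    intro s hs
    obtain ⟨t, ht, hteq⟩ := Finset.exists_mem_eq_inf' hS (fun t => L (s⁻¹ * x * t))
    obtain ⟨u, hu, hueq⟩ := Finset.exists_mem_eq_inf' hS (fun u => L (t⁻¹ * y * u))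
    have h1 : L (s⁻¹ * x * t) ≤ A x := by
      rw [← hteq]; simp only [hAdef]
      exact Finset.le_sup' (fun s => S.inf' hS (fun t => L (s⁻¹ * x * t))) hs
    have h2 : L (t⁻¹ * y * u) ≤ A y := by
      rw [← hueq]; simp only [hAdef]
      exact Finset.le_sup' (fun s => S.inf' hS (fun t => L (s⁻¹ * y * t))) ht
    calc S.inf' hS (fun v => L (s⁻¹ * (x * y) * v)) ≤ L (s⁻¹ * (x * y) * u) :=
          Finset.inf'_le _ hu
      _ = L ((s⁻¹ * x * t) * (t⁻¹ * y * u)) := by congr 1; group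
      _ ≤ L (s⁻¹ * x * t) + L (t⁻¹ * y * u) := hL.subadd _ _
      _ ≤ A x + A y := add_le_add h1 h2
  have hB_sub : ∀ x y : G, B (x * y) ≤ B x + B y := by
    intro x y
    simp only [hBdef]
    refine Finset.sup'_le hS _ ?_
    intro t ht
    obtain ⟨u, hu, hueq⟩ := Finset.exists_mem_eq_inf' hS (fun s => L (s⁻¹ * y * t))
    obtain ⟨s, hs, hseq⟩ := Finset.exists_mem_eq_inf' hS (fun s => L (s⁻¹ * x * u))
    have h1 : L (u⁻¹ * y * t) ≤ B y := by
      rw [← hueq]; simp only [hBdef]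
      exact Finset.le_sup' (fun t => S.inf' hS (fun s => L (s⁻¹ * y * t))) ht
    have h2 : L (s⁻¹ * x * u) ≤ B x := by
      rw [← hseq]; simp only [hBdef]
      exact Finset.le_sup' (fun t => S.inf' hS (fun s => L (s⁻¹ * x * t))) hu
    calc S.inf' hS (fun s => L (s⁻¹ * (x * y) * t)) ≤ L (s⁻¹ * (x * y) * t) :=
          Finset.inf'_le _ hs
      _ = L ((s⁻¹ * x * u) * (u⁻¹ * y * t)) := by congr 1; group
      _ ≤ L (s⁻¹ * x * u) + L (u⁻¹ * y * t) := hL.subadd _ _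
      _ ≤ B x + B y := add_le_add h2 h1
  -- The new length function.
  refine ⟨fun x => max (A x) (B x), ⟨?_, ?_, ?_, ?_⟩, ⟨?_, ?_⟩, ?_, ?_⟩
  · -- nonneg
    intro x
    exact le_trans (hA_nonneg x) (le_max_left _ _)
  · -- map_one
    have hA1 : A 1 = 0 := hA0 1 (fun s hs => ⟨s, hs, by simpa using H.one_mem⟩)
    have hB1 : B 1 = 0 := hB0 1 (fun t ht => ⟨t, ht, by simpa using H.one_mem⟩)
    simp [hA1, hB1]
  · -- map_inv
    intro x
    have h1 : A x⁻¹ = B x := hAB x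
    have h2 : B x⁻¹ = A x := by
      have h := hAB x⁻¹
      rw [inv_inv] at h
      exact h.symm
    rw [h1, h2, max_comm]
  · -- subadd
    intro x y
    exact max_le (le_trans (hA_sub x y) (add_le_add (le_max_left _ _) (le_max_left _ _)))
      (le_trans (hB_sub x y) (add_le_add (le_max_right _ _) (le_max_right _ _)))
  · -- L dominates L'
    refine ⟨1, 2 * C + 1, one_pos, by linarith, ?_⟩
    intro x
    have hAle : A x ≤ L x + 2 * C := by
      simp only [hAdef]
      refine Finset.sup'_le hS _ ?_
      intro s hs
      calc S.inf' hS (fun t => L (s⁻¹ * x * t)) ≤ L (s⁻¹ * x * s) := Finset.inf'_le _ hs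
        _ ≤ L (s⁻¹ * x) + L s := hL.subadd _ _
        _ ≤ L s⁻¹ + L x + L s := add_le_add_left (hL.subadd _ _) _
        _ = L s + L x + L s := by rw [hL.map_inv]
        _ ≤ C + L x + C := by
            have := hC s hs
            linarith
        _ = L x + 2 * C := by ring
    have hBle : B x ≤ L x + 2 * C := by
      simp only [hBdef]
      refine Finset.sup'_le hS _ ?_
      intro t ht
      calc S.inf' hS (fun s => L (s⁻¹ * x * t)) ≤ L (t⁻¹ * x * t) := Finset.inf'_le _ ht
        _ ≤ L (t⁻¹ * x) + L t := hL.subadd _ _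
        _ ≤ L t⁻¹ + L x + L t := add_le_add_left (hL.subadd _ _) _
        _ = L t + L x + L t := by rw [hL.map_inv]
        _ ≤ C + L x + C := by
            have := hC t ht
            linarith
        _ = L x + 2 * C := by ring
    have := max_le hAle hBle
    linarith [this]
  · -- L' dominates L
    refine ⟨1, C + 1, one_pos, by linarith, ?_⟩
    intro x
    obtain ⟨t, ht, hteq⟩ := Finset.exists_mem_eq_inf' hS (fun t => L (1⁻¹ * x * t))
    have h1 : S.inf' hS (fun t => L (1⁻¹ * x * t)) ≤ A x := by
      simp only [hAdef]
      exact Finset.le_sup' (fun s => S.inf' hS (fun t => L (s⁻¹ * x * t))) h1S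
    have h2 : L x ≤ L (1⁻¹ * x * t) + L t := by
      calc L x = L ((1⁻¹ * x * t) * t⁻¹) := by congr 1; group
        _ ≤ L (1⁻¹ * x * t) + L t⁻¹ := hL.subadd _ _
        _ = L (1⁻¹ * x * t) + L t := by rw [hL.map_inv]
    have h3 : L t ≤ C := hC t ht
    have h4 : A x ≤ max (A x) (B x) := le_max_left _ _
    rw [← hteq] at h2
    linarith
  · -- vanishes on H
    intro h hh
    have hA' : A h = 0 := by
      refine hA0 h ?_
      intro s hs
      refine ⟨s, hs, ?_⟩
      have : s⁻¹ * h * (s⁻¹)⁻¹ ∈ H := Subgroup.Normal.conj_mem ‹H.Normal› h hh s⁻¹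
      rwa [inv_inv] at this
    have hB' : B h = 0 := by
      refine hB0 h ?_
      intro t ht
      refine ⟨t, ht, ?_⟩
      have : t⁻¹ * h * (t⁻¹)⁻¹ ∈ H := Subgroup.Normal.conj_mem ‹H.Normal› h hh t⁻¹
      rwa [inv_inv] at this
    simp [hA', hB']
  · -- vanishes on K
    intro k hk
    have hA' : A k = 0 := by
      refine hA0 k ?_
      intro s hs
      obtain ⟨t, ht, hmem⟩ := hrep (k⁻¹ * s) (K.mul_mem (K.inv_mem hk) (hSK s hs))
      refine ⟨t, ht, ?_⟩
      have : (t⁻¹ * (k⁻¹ * s))⁻¹ ∈ H := H.inv_mem hmem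
      have he : (t⁻¹ * (k⁻¹ * s))⁻¹ = s⁻¹ * k * t := by group
      rwa [he] at this
    have hB' : B k = 0 := by
      refine hB0 k ?_
      intro t ht
      obtain ⟨s, hs, hmem⟩ := hrep (k * t) (K.mul_mem hk (hSK t ht))
      refine ⟨s, hs, ?_⟩
      have he : s⁻¹ * (k * t) = s⁻¹ * k * t := by group
      rwa [he] at hmem
    simp [hA', hB']
end
end

section
/- Every finitely generated group whose commutator (derived) subgroup is finite has property (RD). -/
noncomputable section

open scoped ENNReal

namespace StmtFourAux

open HeckeRDPaper

variable {G : Type*} [Group G]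

/-- Step A: a "homomorphism" to `ℤⁿ` with finite kernel. -/
theorem exists_phi (hfg : Group.FG G) (hfin : Finite (commutator G)) :
    ∃ (n : ℕ) (φ : G → (Fin n →₀ ℤ)),
      (∀ a b, φ (a * b) = φ a + φ b) ∧ {g : G | φ g = 0}.Finite := by
  haveI := hfg
  haveI : Group.FG (Abelianization G) :=
    Group.fg_of_surjective (f := Abelianization.of)
      (fun x => Quotient.inductionOn' x fun a => ⟨a, rfl⟩)
  haveI : AddGroup.FG (Additive (Abelianization G)) := AddGroup.fg_of_group_fg
  obtain ⟨n, ι, fι, p, hp, e, ⟨F⟩⟩ :=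
    AddCommGroup.equiv_free_prod_directSum_zmod (Additive (Abelianization G))
  refine ⟨n, fun g => (F (Additive.ofMul (Abelianization.of g))).1, fun a b => ?_, ?_⟩
  · simp only [map_mul, ofMul_mul, map_add, Prod.fst_add]
  · haveI : ∀ i : ι, NeZero (p i ^ e i) := fun i => ⟨pow_ne_zero _ (hp i).pos.ne'⟩
    haveI : Finite (DirectSum ι fun i => ZMod (p i ^ e i)) :=
      Finite.of_equiv _ DFinsupp.equivFunOnFintype.symm
    have hT : {a : Abelianization G | (F (Additive.ofMul a)).1 = 0}.Finite := by
      have hinj : Set.InjOn (fun a => (F (Additive.ofMul a)).2)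
          {a : Abelianization G | (F (Additive.ofMul a)).1 = 0} := by
        intro x hx y hy hxy
        have hxy' : F (Additive.ofMul x) = F (Additive.ofMul y) := by
          ext
          · rw [hx, hy]
          · rw [show (F (Additive.ofMul x)).2 = (F (Additive.ofMul y)).2 from hxy]
        exact Additive.ofMul.injective (F.injective hxy')
      exact Set.Finite.of_finite_image (Set.toFinite _) hinj
    have hsub : {g : G | (F (Additive.ofMul (Abelianization.of g))).1 = 0}
        ⊆ ⋃ a ∈ {a : Abelianization G | (F (Additive.ofMul a)).1 = 0},
          {g : G | Abelianization.of g = a} := fun g hg => Set.mem_biUnion hg rfl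
    refine Set.Finite.subset (Set.Finite.biUnion hT fun a _ => ?_) hsub
    rcases Set.eq_empty_or_nonempty {g : G | Abelianization.of g = a} with h | ⟨g₀, hg₀⟩
    · simp [h]
    · have hsub2 : {g : G | Abelianization.of g = a}
          ⊆ (fun c => g₀ * c) '' (commutator G : Set G) := by
        intro g hg
        refine ⟨g₀⁻¹ * g, ?_, by group⟩
        have hg' : Abelianization.of g = a := hg
        have hg₀' : Abelianization.of g₀ = a := hg₀
        have h1 : Abelianization.of (g₀⁻¹ * g) = 1 := by
          rw [map_mul, map_inv, hg', hg₀', inv_mul_cancel]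
        exact (QuotientGroup.eq_one_iff _).mp h1
      exact Set.Finite.subset ((Set.toFinite _).image _) hsub2

/-- Step B: cardinality bound for balls. -/
theorem ball_card_bound {n : ℕ} {φ : G → (Fin n →₀ ℤ)}
    (hadd : ∀ a b, φ (a * b) = φ a + φ b) (hker : {g : G | φ g = 0}.Finite)
    (m : ℕ) (S : Finset G) (hS : ∀ g ∈ S, ∀ i, |φ g i| ≤ (m : ℤ)) :
    S.card ≤ hker.toFinset.card * (2 * m + 1) ^ n := by
  classical
  have h1 : φ 1 = 0 := by
    have h := hadd 1 1
    rw [mul_one] at h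
    exact (left_eq_add.mp h)
  have hinv : ∀ g : G, φ g⁻¹ = -φ g := by
    intro g
    have h := hadd g⁻¹ g
    rw [inv_mul_cancel, h1] at h
    exact eq_neg_of_add_eq_zero_left h.symm
  have step1 : S.card ≤ hker.toFinset.card * (S.image φ).card := by
    refine Finset.card_le_mul_card_image S _ (fun v hv => ?_)
    obtain ⟨g₀, hg₀S, hg₀v⟩ := Finset.mem_image.mp hv
    refine Finset.card_le_card_of_injOn (fun g => g₀⁻¹ * g) (fun g hg => ?_) ?_
    · simp only [Finset.mem_coe, Finset.mem_filter] at hg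
      rw [Finset.mem_coe, Set.Finite.mem_toFinset]
      show φ (g₀⁻¹ * g) = 0
      rw [hadd, hinv, hg₀v, hg.2, neg_add_cancel]
    · intro a _ b _ hab
      exact mul_left_cancel hab
  have step2 : (S.image φ).card ≤ (2 * m + 1) ^ n := by
    have hmain : (S.image φ).card
        ≤ (Finset.Icc (fun _ : Fin n => -(m:ℤ)) (fun _ => (m:ℤ))).card := by
      refine Finset.card_le_card_of_injOn (fun v => (v : Fin n → ℤ)) (fun v hv => ?_) ?_
      · obtain ⟨g, hgS, rfl⟩ := Finset.mem_image.mp hv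
        rw [Finset.mem_coe, Finset.mem_Icc]
        constructor <;> intro i
        · exact neg_le_of_abs_le (hS g hgS i)
        · exact le_of_abs_le (hS g hgS i)
      · intro a _ b _ hab
        exact DFunLike.coe_injective hab
    refine hmain.trans ?_
    rw [Pi.card_Icc]
    have hc : (Finset.Icc (-(m:ℤ)) (m:ℤ)).card = 2 * m + 1 := by
      rw [Int.card_Icc]; omega
    rw [Finset.prod_const, hc, Finset.card_univ, Fintype.card_fin]
  calc S.card ≤ hker.toFinset.card * (S.image φ).card := step1
    _ ≤ hker.toFinset.card * (2 * m + 1) ^ n := Nat.mul_le_mul_left _ step2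

/-- For `H = ⊥`, `Quotient.out` of the class of `g` is `g` itself. -/
theorem bot_out_mk (g : G) :
    (Quotient.mk (QuotientGroup.rightRel (⊥ : Subgroup G)) g).out = g := by
  have h : Quotient.mk (QuotientGroup.rightRel (⊥ : Subgroup G))
      ((Quotient.mk (QuotientGroup.rightRel (⊥ : Subgroup G)) g).out)
      = Quotient.mk (QuotientGroup.rightRel (⊥ : Subgroup G)) g := Quotient.out_eq _
  have h2 := Quotient.exact h
  have h3 := QuotientGroup.rightRel_apply.mp h2
  have h4 := Subgroup.mem_bot.mp h3
  exact (mul_inv_eq_one.mp h4).symm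

/-- The obvious bijection `G ≃ ⊥\G`. -/
def eG (G : Type*) [Group G] : G ≃ RCos (⊥ : Subgroup G) where
  toFun := Quotient.mk (QuotientGroup.rightRel (⊥ : Subgroup G))
  invFun := Quotient.out
  left_inv := bot_out_mk
  right_inv := Quotient.out_eq

theorem tsum_out (F : G → ℝ) :
    ∑' x : RCos (⊥ : Subgroup G), F x.out = ∑' g : G, F g := by
  rw [← Equiv.tsum_eq (eG G) (fun x => F x.out)]
  exact tsum_congr fun g => by rw [show (eG G g).out = g from bot_out_mk g]

theorem summable_out {F : G → ℝ} (h : Summable fun x : RCos (⊥ : Subgroup G) => F x.out) :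
    Summable F := by
  have h2 : Summable ((fun x : RCos (⊥ : Subgroup G) => F x.out) ∘ (eG G)) :=
    ((eG G).summable_iff).mpr h
  refine (summable_congr fun g => ?_).mp h2
  simp only [Function.comp]
  rw [show (eG G g).out = g from bot_out_mk g]

theorem lp_norm_sqrt (v : lp (fun _ : G => ℝ) 2) :
    Real.sqrt (∑' g : G, (v : G → ℝ) g ^ 2) = ‖v‖ := by
  have h2 : (0:ℝ) < (2 : ℝ≥0∞).toReal := by norm_num
  rw [lp.norm_eq_tsum_rpow h2 v]
  have he : ∀ g : G, ‖(v : G → ℝ) g‖ ^ (2 : ℝ≥0∞).toReal = (v : G → ℝ) g ^ 2 := by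
    intro g
    have h22 : (2 : ℝ≥0∞).toReal = ((2:ℕ) : ℝ) := by norm_num
    rw [h22, Real.rpow_natCast, Real.norm_eq_abs, sq_abs]
  simp only [he]
  rw [Real.sqrt_eq_rpow]
  norm_num

theorem memℓp_sq {k : G → ℝ} (hk2 : Summable fun g : G => k g ^ 2) :
    Memℓp k (2 : ℝ≥0∞) := by
  apply memℓp_gen
  have he : ∀ g : G, ‖k g‖ ^ (2 : ℝ≥0∞).toReal = k g ^ 2 := by
    intro g
    have h22 : (2 : ℝ≥0∞).toReal = ((2:ℕ) : ℝ) := by norm_num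
    rw [h22, Real.rpow_natCast, Real.norm_eq_abs, sq_abs]
  simpa only [he] using hk2

set_option maxHeartbeats 1000000 in
/-- Step C: the crude `ℓ²` convolution bound. -/
theorem conv_l2_bound (f k : G → ℝ) (hf0 : ∀ g, 0 ≤ f g) (hk0 : ∀ g, 0 ≤ k g)
    (S : Finset G) (hfS : ∀ g, f g ≠ 0 → g ∈ S)
    (hk2 : Summable fun g : G => k g ^ 2) :
    Real.sqrt (∑' g : G, (∑ s ∈ S, f s * k (s⁻¹ * g)) ^ 2)
      ≤ (S.card : ℝ) * Real.sqrt (∑' g : G, f g ^ 2) * Real.sqrt (∑' g : G, k g ^ 2) := by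
  classical
  have hKs : ∀ s : G, Summable fun g : G => k (s⁻¹ * g) ^ 2 := by
    intro s
    exact (Equiv.mulLeft s⁻¹).summable_iff.mpr hk2
  set K : lp (fun _ : G => ℝ) 2 := ⟨k, memℓp_sq hk2⟩ with hK
  set Ktr : G → lp (fun _ : G => ℝ) 2 :=
    fun s => ⟨fun g => k (s⁻¹ * g), memℓp_sq (hKs s)⟩ with hKtr
  have hnorm_tr : ∀ s : G, ‖Ktr s‖ = ‖K‖ := by
    intro s
    rw [← lp_norm_sqrt, ← lp_norm_sqrt]
    congr 1
    exact (Equiv.mulLeft s⁻¹).tsum_eq (fun g => k g ^ 2)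
  set V : lp (fun _ : G => ℝ) 2 := ∑ s ∈ S, f s • Ktr s with hV
  have hVcoe : ∀ g : G, (V : G → ℝ) g = ∑ s ∈ S, f s * k (s⁻¹ * g) := by
    intro g
    rw [hV]
    rw [lp.coeFn_sum]
    rw [Finset.sum_apply]
    refine Finset.sum_congr rfl fun s _ => ?_
    rw [lp.coeFn_smul]
    rfl
  have hL : Real.sqrt (∑' g : G, (∑ s ∈ S, f s * k (s⁻¹ * g)) ^ 2) = ‖V‖ := by
    rw [← lp_norm_sqrt V]
    congr 1
    exact tsum_congr fun g => by rw [hVcoe g]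
  rw [hL]
  have h1 : ‖V‖ ≤ (∑ s ∈ S, f s) * ‖K‖ := by
    calc ‖V‖ ≤ ∑ s ∈ S, ‖f s • Ktr s‖ := norm_sum_le _ _
      _ = ∑ s ∈ S, f s * ‖K‖ := by
          refine Finset.sum_congr rfl fun s _ => ?_
          rw [norm_smul, hnorm_tr, Real.norm_eq_abs, abs_of_nonneg (hf0 s)]
      _ = (∑ s ∈ S, f s) * ‖K‖ := by rw [Finset.sum_mul]
  have hKnorm : ‖K‖ = Real.sqrt (∑' g : G, k g ^ 2) := by rw [← lp_norm_sqrt K]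
  have hsum_f : ∑' g : G, f g ^ 2 = ∑ s ∈ S, f s ^ 2 := by
    refine tsum_eq_sum fun g hg => ?_
    have hz : f g = 0 := by_contra fun h => hg (hfS g h)
    rw [hz]; ring
  have hCS : (∑ s ∈ S, f s) ≤ Real.sqrt (S.card) * Real.sqrt (∑' g : G, f g ^ 2) := by
    rw [hsum_f, ← Real.sqrt_mul (by positivity)]
    have h := sq_sum_le_card_mul_sum_sq (s := S) (f := f)
    have h2 := Real.sqrt_le_sqrt h
    rwa [Real.sqrt_sq (Finset.sum_nonneg fun s _ => hf0 s)] at h2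
  have hcard : Real.sqrt (S.card) ≤ (S.card : ℝ) := by
    rcases Nat.eq_zero_or_pos S.card with h | h
    · simp [h]
    · have h1' : (1:ℝ) ≤ S.card := by exact_mod_cast h
      nlinarith [Real.sq_sqrt (by positivity : (0:ℝ) ≤ (S.card:ℝ)),
        Real.sqrt_nonneg (S.card : ℝ)]
  have hKnn : 0 ≤ ‖K‖ := norm_nonneg _
  calc ‖V‖ ≤ (∑ s ∈ S, f s) * ‖K‖ := h1
    _ ≤ (Real.sqrt (S.card) * Real.sqrt (∑' g : G, f g ^ 2)) * ‖K‖ :=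
        mul_le_mul_of_nonneg_right hCS hKnn
    _ ≤ ((S.card : ℝ) * Real.sqrt (∑' g : G, f g ^ 2)) * ‖K‖ := by gcongr
    _ = (S.card : ℝ) * Real.sqrt (∑' g : G, f g ^ 2) * Real.sqrt (∑' g : G, k g ^ 2) := by
        rw [hKnorm]

end StmtFourAux


open HeckeRDPaper in
/-- Every finitely generated group with finite commutator subgroup
has property (RD). -/
theorem stmt4 {G : Type*} [Group G] (hfg : Group.FG G)
    (hfin : Finite (commutator G)) :
    GroupRD G := by
  classical
  obtain ⟨n, φ, hadd, hker⟩ := StmtFourAux.exists_phi hfg hfin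
  have h1 : φ 1 = 0 := by
    have h := hadd 1 1
    rw [mul_one] at h
    exact (left_eq_add.mp h)
  have hinv : ∀ g : G, φ g⁻¹ = -φ g := by
    intro g
    have h := hadd g⁻¹ g
    rw [inv_mul_cancel, h1] at h
    exact eq_neg_of_add_eq_zero_left h.symm
  -- the length function
  set L : G → ℝ := fun g => ((∑ i : Fin n, |φ g i| : ℤ) : ℝ) with hL
  have hLnn : ∀ g, 0 ≤ L g := by
    intro g
    have : (0:ℤ) ≤ ∑ i : Fin n, |φ g i| :=
      Finset.sum_nonneg fun i _ => abs_nonneg _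
    simp only [hL]
    exact_mod_cast this
  refine ⟨L, ⟨⟨hLnn, by simp [hL, h1], fun g => by simp [hL, hinv g], fun g h => ?_⟩, ?_⟩, ?_⟩
  · -- subadditivity
    have hz : (∑ i : Fin n, |φ (g * h) i| : ℤ)
        ≤ (∑ i : Fin n, |φ g i|) + (∑ i : Fin n, |φ h i|) := by
      rw [← Finset.sum_add_distrib]
      refine Finset.sum_le_sum fun i _ => ?_
      rw [hadd]
      exact abs_add_le _ _
    have : ((∑ i : Fin n, |φ (g * h) i| : ℤ) : ℝ)
        ≤ (((∑ i : Fin n, |φ g i|) + (∑ i : Fin n, |φ h i|) : ℤ) : ℝ) := by exact_mod_cast hz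
    simpa [hL] using this
  · -- vanishing on ⊥
    intro x hx
    rw [Subgroup.mem_bot] at hx
    simp [hL, hx, h1]
  · -- property (RD)
    set C : ℕ := hker.toFinset.card with hC
    refine ⟨Polynomial.C (C:ℝ) * (Polynomial.C 2 * Polynomial.X + 1) ^ n,
      fun r hr f k hf0 _hbi hFD hfr hk0 _hlinv hksum => ?_⟩
    have hPeval : (Polynomial.C (C:ℝ) * (Polynomial.C 2 * Polynomial.X + 1) ^ n).eval r
        = (C:ℝ) * (2 * r + 1) ^ n := by
      simp [Polynomial.eval_mul, Polynomial.eval_pow]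
    rw [hPeval]
    -- support of f is finite
    have hsingle : ∀ g : G,
        {y : G | ∃ h₁ ∈ (⊥ : Subgroup G), ∃ h₂ ∈ (⊥ : Subgroup G), y = h₁ * g * h₂} = {g} := by
      intro g
      ext y
      simp [Subgroup.mem_bot]
    have hsupp : (Function.support f).Finite := by
      have hsub : Function.support f ⊆
          ⋃ s ∈ {s : Set G | ∃ g : G, f g ≠ 0 ∧
            s = {y : G | ∃ h₁ ∈ (⊥ : Subgroup G), ∃ h₂ ∈ (⊥ : Subgroup G), y = h₁ * g * h₂}}, s := by
        intro g hg
        refine Set.mem_biUnion (⟨g, hg, rfl⟩ :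
          (_ ∈ {s : Set G | ∃ g : G, f g ≠ 0 ∧
            s = {y : G | ∃ h₁ ∈ (⊥ : Subgroup G), ∃ h₂ ∈ (⊥ : Subgroup G), y = h₁ * g * h₂}})) ?_
        rw [hsingle g]
        rfl
      refine Set.Finite.subset (Set.Finite.biUnion hFD fun s hs => ?_) hsub
      obtain ⟨g, _, rfl⟩ := hs
      rw [hsingle g]
      exact Set.finite_singleton g
    set S : Finset G := hsupp.toFinset with hS
    have hfS : ∀ g, f g ≠ 0 → g ∈ S := fun g hg => hsupp.mem_toFinset.mpr hg
    have hfS0 : ∀ g, g ∉ S → f g = 0 := fun g hg =>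
      by_contra fun h => hg (hfS g h)
    -- coordinates of support elements are bounded
    set m : ℕ := (⌊r⌋).toNat with hm
    have hmr : ((m:ℤ):ℝ) ≤ r := by
      have h0 : (0:ℤ) ≤ ⌊r⌋ := Int.floor_nonneg.mpr hr.le
      rw [hm, Int.toNat_of_nonneg h0]
      exact Int.floor_le r
    have hSbound : ∀ g ∈ S, ∀ i, |φ g i| ≤ (m : ℤ) := by
      intro g hg i
      have hfg' : f g ≠ 0 := hsupp.mem_toFinset.mp hg
      have hLg : L g ≤ r := hfr g hfg'
      have hone : |φ g i| ≤ (∑ j : Fin n, |φ g j| : ℤ) :=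
        Finset.single_le_sum (fun j _ => abs_nonneg (φ g j)) (Finset.mem_univ i)
      have hcast : ((|φ g i| : ℤ) : ℝ) ≤ L g := by
        simp only [hL]; exact_mod_cast hone
      have : ((|φ g i| : ℤ) : ℝ) ≤ r := le_trans hcast hLg
      have h2 : |φ g i| ≤ ⌊r⌋ := Int.le_floor.mpr this
      have h0 : (0:ℤ) ≤ ⌊r⌋ := Int.floor_nonneg.mpr hr.le
      rw [hm, Int.toNat_of_nonneg h0]
      exact h2
    have hcard : S.card ≤ C * (2 * m + 1) ^ n :=
      StmtFourAux.ball_card_bound hadd hker m S hSbound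
    have hcardR : (S.card : ℝ) ≤ (C:ℝ) * (2 * r + 1) ^ n := by
      have hstep : ((C * (2 * m + 1) ^ n : ℕ) : ℝ) ≤ (C:ℝ) * (2 * r + 1) ^ n := by
        push_cast
        have hb : (2 * (m:ℝ) + 1) ≤ 2 * r + 1 := by
          have : ((m:ℤ):ℝ) = (m:ℝ) := by push_cast; ring
          nlinarith [hmr]
        have hbn : (2 * (m:ℝ) + 1) ^ n ≤ (2 * r + 1) ^ n := by
          refine pow_le_pow_left₀ (by positivity) hb n
        have hCnn : (0:ℝ) ≤ (C:ℝ) := Nat.cast_nonneg _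
        nlinarith [hbn, hCnn]
      exact le_trans (by exact_mod_cast hcard) hstep
    -- reduce l2 and conv to sums over G
    have hksumG : Summable fun g : G => k g ^ 2 := StmtFourAux.summable_out hksum
    have hconv : ∀ g : G, conv (⊥ : Subgroup G) f k g = ∑ s ∈ S, f s * k (s⁻¹ * g) := by
      intro g
      have h1' : conv (⊥ : Subgroup G) f k g = ∑' x : G, f (g * x⁻¹) * k x :=
        StmtFourAux.tsum_out (fun x => f (g * x⁻¹) * k x)
      rw [h1']
      have h2' : ∑' x : G, f (g * x⁻¹) * k x
          = ∑ x ∈ S.image (fun s => s⁻¹ * g), f (g * x⁻¹) * k x := by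
        refine tsum_eq_sum fun x hx => ?_
        have hfz : f (g * x⁻¹) = 0 := by
          by_contra h
          refine hx (Finset.mem_image.mpr ⟨g * x⁻¹, hfS _ h, ?_⟩)
          group
        rw [hfz, zero_mul]
      rw [h2']
      rw [Finset.sum_image (fun a _ b _ hab => by
        have := congrArg (fun z => z * g⁻¹) hab
        simpa using this)]
      refine Finset.sum_congr rfl fun s _ => ?_
      congr 1
      congr 1
      group
    have hl2conv : l2 (⊥ : Subgroup G) (conv (⊥ : Subgroup G) f k)
        = Real.sqrt (∑' g : G, (∑ s ∈ S, f s * k (s⁻¹ * g)) ^ 2) := by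
      unfold l2
      congr 1
      rw [StmtFourAux.tsum_out (fun g => conv (⊥ : Subgroup G) f k g ^ 2)]
      exact tsum_congr fun g => by rw [hconv g]
    have hl2f : l2 (⊥ : Subgroup G) f = Real.sqrt (∑' g : G, f g ^ 2) := by
      unfold l2
      rw [StmtFourAux.tsum_out (fun g => f g ^ 2)]
    have hl2k : l2 (⊥ : Subgroup G) k = Real.sqrt (∑' g : G, k g ^ 2) := by
      unfold l2
      rw [StmtFourAux.tsum_out (fun g => k g ^ 2)]
    rw [hl2conv, hl2f, hl2k]
    have hmain := StmtFourAux.conv_l2_bound f k hf0 hk0 S hfS hksumG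
    refine hmain.trans ?_
    have hs1 : (0:ℝ) ≤ Real.sqrt (∑' g : G, f g ^ 2) := Real.sqrt_nonneg _
    have hs2 : (0:ℝ) ≤ Real.sqrt (∑' g : G, k g ^ 2) := Real.sqrt_nonneg _
    gcongr
end
end

section
/- Let G be a finitely generated group whose commutator (derived) subgroup is finite, and let H be any subgroup of G. Then H is an almost normal subgroup of G and the Hecke pair (G,H) has property (RD). -/
noncomputable section

namespace StmtFiveAux

open Finset Pointwise

variable {Q : Type*} [CommGroup Q] [DecidableEq Q]

/-- The ball of radius `n` for the generating set `T ∪ T⁻¹ ∪ {1}`. -/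
def uball (T : Finset Q) (n : ℕ) : Finset Q := (insert (1:Q) (T ∪ T⁻¹)) ^ n

lemma one_mem_ugen (T : Finset Q) : (1:Q) ∈ insert (1:Q) (T ∪ T⁻¹) := mem_insert_self _ _

lemma one_mem_uball (T : Finset Q) (n : ℕ) : (1:Q) ∈ uball T n := by
  induction n with
  | zero => simp [uball]
  | succ n ih =>
    have : (1:Q) * 1 ∈ uball T n * insert (1:Q) (T ∪ T⁻¹) :=
      Finset.mul_mem_mul ih (one_mem_ugen T)
    simpa [uball, pow_succ] using this

lemma uball_mul (T : Finset Q) {m n : ℕ} {x y : Q} (hx : x ∈ uball T m) (hy : y ∈ uball T n) :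
    x * y ∈ uball T (m + n) := by
  have : x * y ∈ uball T m * uball T n := Finset.mul_mem_mul hx hy
  simpa [uball, pow_add] using this

lemma uball_mono (T : Finset Q) {m n : ℕ} (h : m ≤ n) {x : Q} (hx : x ∈ uball T m) :
    x ∈ uball T n := by
  have := uball_mul T hx (one_mem_uball T (n - m))
  simpa [Nat.add_sub_cancel' h] using this

lemma inv_mem_uball (T : Finset Q) {n : ℕ} {x : Q} (hx : x ∈ uball T n) :
    x⁻¹ ∈ uball T n := by
  induction n generalizing x with
  | zero => simp_all [uball]
  | succ n ih =>
    rw [uball, pow_succ, Finset.mem_mul] at hx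
    obtain ⟨y, hy, u, hu, rfl⟩ := hx
    have hu' : u⁻¹ ∈ insert (1:Q) (T ∪ T⁻¹) := by
      rcases Finset.mem_insert.1 hu with rfl | hu
      · simp
      rcases Finset.mem_union.1 hu with h | h
      · exact Finset.mem_insert_of_mem (Finset.mem_union_right _ (by simpa using h))
      · exact Finset.mem_insert_of_mem (Finset.mem_union_left _ (by
          simpa using h))
    have : u⁻¹ * y⁻¹ ∈ uball T (1 + n) := by
      have h1 : u⁻¹ ∈ uball T 1 := by simpa [uball] using hu'
      exact uball_mul T h1 (ih hy)
    simpa [mul_inv_rev, Nat.add_comm] using this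

lemma mem_uball_of_mem (T : Finset Q) {x : Q} (hx : x ∈ T) : x ∈ uball T 1 := by
  simp only [uball, pow_one]
  exact Finset.mem_insert_of_mem (Finset.mem_union_left _ hx)

lemma exists_uball (T : Finset Q) (hT : Subgroup.closure (T : Set Q) = ⊤) (q : Q) :
    ∃ n, q ∈ uball T n := by
  have hq : q ∈ Subgroup.closure (T : Set Q) := hT ▸ Subgroup.mem_top q
  induction hq using Subgroup.closure_induction with
  | mem x hx => exact ⟨1, mem_uball_of_mem T hx⟩
  | one => exact ⟨0, one_mem_uball T 0⟩
  | mul x y hx hy ihx ihy =>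
    obtain ⟨m, hm⟩ := ihx; obtain ⟨n, hn⟩ := ihy
    exact ⟨m + n, uball_mul T hm hn⟩
  | inv x hx ih =>
    obtain ⟨n, hn⟩ := ih
    exact ⟨n, inv_mem_uball T hn⟩

lemma uball_norm (T : Finset Q) (n : ℕ) {x : Q} (hx : x ∈ uball T n) :
    ∃ e : Q → ℤ, (∀ q, |e q| ≤ n) ∧ x = ∏ t ∈ T, t ^ e t := by
  induction n generalizing x with
  | zero =>
    have hx1 : x = 1 := by simpa [uball] using hx
    exact ⟨0, by simp, by simp [hx1]⟩
  | succ n ih =>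
    rw [uball, pow_succ, Finset.mem_mul] at hx
    obtain ⟨y, hy, u, hu, rfl⟩ := hx
    obtain ⟨e, he, hye⟩ := ih hy
    have hle : ∀ q, |e q| ≤ (n+1 : ℤ) := fun q => (he q).trans (by omega)
    rcases Finset.mem_insert.1 hu with rfl | hu
    · exact ⟨e, by exact_mod_cast hle, by simp [hye]⟩
    have key : ∀ (v : Q), v ∈ T → ∀ (ε : ℤ), |ε| ≤ 1 →
        ∃ e' : Q → ℤ, (∀ q, |e' q| ≤ (n+1:ℕ)) ∧ y * v ^ ε = ∏ t ∈ T, t ^ e' t := by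
      intro v hv ε hε
      refine ⟨fun q => e q + if q = v then ε else 0, ?_, ?_⟩
      · intro q
        have h1 : |e q + if q = v then ε else 0| ≤ |e q| + |if q = v then ε else 0| := abs_add_le _ _
        have h2 : |if q = v then ε else 0| ≤ 1 := by split <;> simp_all
        have := he q
        push_cast
        omega
      · rw [hye]
        have : ∏ t ∈ T, t ^ (e t + if t = v then ε else 0)
             = (∏ t ∈ T, t ^ e t) * ∏ t ∈ T, t ^ (if t = v then ε else 0) := by
          rw [← Finset.prod_mul_distrib]
          exact Finset.prod_congr rfl fun t _ => by rw [zpow_add]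
        rw [this]
        congr 1
        have : ∀ t ∈ T, t ^ (if t = v then ε else 0) = if t = v then t ^ ε else 1 := by
          intro t _; split <;> simp
        rw [Finset.prod_congr rfl this, Finset.prod_ite_eq' T v (fun t => t ^ ε), if_pos hv]
    rcases Finset.mem_union.1 hu with hu | hu
    · obtain ⟨e', h1, h2⟩ := key u hu 1 (by norm_num)
      exact ⟨e', h1, by simpa using h2⟩
    · rw [Finset.mem_inv] at hu
      obtain ⟨v, hv, rfl⟩ := hu
      obtain ⟨e', h1, h2⟩ := key v hv (-1) (by norm_num)
      exact ⟨e', h1, by simpa using h2⟩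

lemma uball_card (T : Finset Q) (n : ℕ) : (uball T n).card ≤ (2*n+1) ^ T.card := by
  classical
  have hsurj : Set.SurjOn (fun e : {x // x ∈ T} → ℤ => ∏ t ∈ T.attach, (t:Q) ^ e t)
      ↑(Fintype.piFinset fun _ : {x // x ∈ T} => Finset.Icc (-(n:ℤ)) n) ↑(uball T n) := by
    intro x hx
    obtain ⟨e, he, rfl⟩ := uball_norm T n (by simpa using hx)
    refine ⟨fun t => e t, ?_, ?_⟩
    · rw [Finset.mem_coe, Fintype.mem_piFinset]
      intro t
      rw [Finset.mem_Icc, ← abs_le]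
      exact he t
    · simp only
      rw [← Finset.prod_attach T (fun t => t ^ e t)]
  have h1 : (uball T n).card ≤ (Fintype.piFinset fun _ : {x // x ∈ T} => Finset.Icc (-(n:ℤ)) n).card :=
    Finset.card_le_card_of_surjOn _ hsurj
  calc (uball T n).card ≤ _ := h1
    _ = (2*n+1) ^ T.card := by
        rw [Fintype.card_piFinset]
        simp only [Int.card_Icc]
        rw [Finset.prod_const]
        congr 1
        · omega
        · simp [Fintype.card_coe]

/-- Word length w.r.t. `T`. -/
def wlen (T : Finset Q) (hT : ∀ q : Q, ∃ n, q ∈ uball T n) (q : Q) : ℕ := Nat.find (hT q)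

lemma wlen_spec (T : Finset Q) (hT : ∀ q : Q, ∃ n, q ∈ uball T n) (q : Q) :
    q ∈ uball T (wlen T hT q) := Nat.find_spec (hT q)

lemma wlen_le (T : Finset Q) (hT : ∀ q : Q, ∃ n, q ∈ uball T n) {q : Q} {n : ℕ}
    (h : q ∈ uball T n) : wlen T hT q ≤ n := Nat.find_min' (hT q) h

lemma wlen_one (T : Finset Q) (hT : ∀ q : Q, ∃ n, q ∈ uball T n) : wlen T hT 1 = 0 :=
  Nat.eq_zero_of_le_zero (wlen_le T hT (one_mem_uball T 0))

lemma wlen_mul (T : Finset Q) (hT : ∀ q : Q, ∃ n, q ∈ uball T n) (a b : Q) :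
    wlen T hT (a * b) ≤ wlen T hT a + wlen T hT b :=
  wlen_le T hT (uball_mul T (wlen_spec T hT a) (wlen_spec T hT b))

lemma wlen_inv (T : Finset Q) (hT : ∀ q : Q, ∃ n, q ∈ uball T n) (a : Q) :
    wlen T hT a⁻¹ = wlen T hT a := by
  refine le_antisymm (wlen_le T hT (inv_mem_uball T (wlen_spec T hT a))) ?_
  have h := wlen_le T hT (inv_mem_uball T (wlen_spec T hT a⁻¹))
  rwa [inv_inv] at h

end StmtFiveAux

open HeckeRDPaper commutatorElement in
theorem stmtA {G : Type*} [Group G] (hfin : Finite (commutator G)) (H : Subgroup G) :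
    AlmostNormal H := by
  intro g
  have hfinQ : Finite (H ⧸ (conjS g H).subgroupOf H) := by
    have hinj : Function.Injective (fun q : H ⧸ (conjS g H).subgroupOf H =>
        (⟨⁅(q.out : G), g⁆, Subgroup.commutator_mem_commutator (Subgroup.mem_top _)
          (Subgroup.mem_top _)⟩ : commutator G)) := by
      intro q₁ q₂ hq
      simp only [Subtype.mk.injEq] at hq
      set h₁ : G := (q₁.out : G) with hh1
      set h₂ : G := (q₂.out : G) with hh2
      have heq : h₁ * g * h₁⁻¹ = h₂ * g * h₂⁻¹ := by
        simp only [commutatorElement_def] at hq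
        have := congrArg (fun x => x * g) (congrArg Subtype.val hq)
        simpa [mul_assoc] using this
      have h4 : h₂⁻¹ * (h₁ * g) = g * (h₂⁻¹ * h₁) := by
        have := congrArg (fun x => h₂⁻¹ * x * h₁) heq
        simpa [mul_assoc] using this
      have h3 : g * (h₂⁻¹ * h₁) * g⁻¹ = h₂⁻¹ * h₁ := by
        rw [← h4]
        simp [mul_assoc]
      have hmem : ((q₂.out)⁻¹ * q₁.out : H) ∈ (conjS g H).subgroupOf H := by
        rw [Subgroup.mem_subgroupOf]
        refine Subgroup.mem_map.mpr ⟨h₂⁻¹ * h₁, ?_, ?_⟩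
        · exact H.mul_mem (H.inv_mem q₂.out.2) q₁.out.2
        · simpa [MulAut.conj_apply, mul_assoc] using h3
      have : (QuotientGroup.mk q₂.out : H ⧸ (conjS g H).subgroupOf H) = QuotientGroup.mk q₁.out :=
        QuotientGroup.eq.mpr hmem
      rw [QuotientGroup.out_eq', QuotientGroup.out_eq'] at this
      exact this.symm
    exact Finite.of_injective _ hinj
  exact Subgroup.index_ne_zero_of_finite

set_option maxHeartbeats 1000000 in
open HeckeRDPaper StmtFiveAux Pointwise commutatorElement in
theorem stmtB {G : Type*} [Group G] (hfg : Group.FG G)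
    (hfin : Finite (commutator G)) (H : Subgroup G) : HeckeRD H := by
  classical
  obtain ⟨Sset, hSgen, hSfin⟩ := Group.fg_iff.mp hfg
  set Co : Subgroup G := commutator G with hCo
  set N : Subgroup G := H ⊔ Co with hNdef
  haveI hNnormal : N.Normal := by
    constructor
    intro n hn g
    have hcm : ⁅g, n⁆ ∈ Co :=
      Subgroup.commutator_mem_commutator (Subgroup.mem_top g) (Subgroup.mem_top n)
    have hgn : g * n * g⁻¹ = ⁅g, n⁆ * n := by group
    rw [hgn]
    exact N.mul_mem (Subgroup.mem_sup_right hcm) hn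
  letI instQ : CommGroup (G ⧸ N) :=
    { (inferInstance : Group (G ⧸ N)) with
      mul_comm := by
        intro a b
        induction a using QuotientGroup.induction_on with | _ x => ?_
        induction b using QuotientGroup.induction_on with | _ y => ?_
        show QuotientGroup.mk x * QuotientGroup.mk y = QuotientGroup.mk y * QuotientGroup.mk x
        rw [← QuotientGroup.mk_mul, ← QuotientGroup.mk_mul]
        apply QuotientGroup.eq.mpr
        have h1 : (x*y)⁻¹ * (y*x) = ⁅y⁻¹, x⁻¹⁆ := by group
        rw [h1]
        exact Subgroup.mem_sup_right
          (Subgroup.commutator_mem_commutator (Subgroup.mem_top _) (Subgroup.mem_top _)) }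
  set π : G →* G ⧸ N := QuotientGroup.mk' N with hπdef
  set T : Finset (G ⧸ N) := hSfin.toFinset.image π with hTdef
  have hTgen : Subgroup.closure (T : Set (G ⧸ N)) = ⊤ := by
    have h1 : (T : Set (G ⧸ N)) = π '' Sset := by
      rw [hTdef, Finset.coe_image, Set.Finite.coe_toFinset]
    rw [h1, ← MonoidHom.map_closure, hSgen]
    rw [← MonoidHom.range_eq_map]
    exact MonoidHom.range_eq_top.mpr (QuotientGroup.mk'_surjective N)
  have hex : ∀ q : G ⧸ N, ∃ n, q ∈ uball T n := exists_uball T hTgen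
  set L : G → ℝ := fun g => (wlen T hex (π g) : ℝ) with hL
  have hπH : ∀ h ∈ H, π h = 1 := fun h hh =>
    (QuotientGroup.eq_one_iff h).mpr (Subgroup.mem_sup_left hh)
  have hLH : IsHeckeLength H L := by
    refine ⟨⟨fun g => Nat.cast_nonneg _, ?_, ?_, ?_⟩, ?_⟩
    · show (wlen T hex (π 1) : ℝ) = 0
      rw [map_one, wlen_one T hex]
      norm_num
    · intro g
      show (wlen T hex (π g⁻¹) : ℝ) = (wlen T hex (π g) : ℝ)
      rw [map_inv, wlen_inv T hex]
    · intro g h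
      show (wlen T hex (π (g * h)) : ℝ) ≤ (wlen T hex (π g) : ℝ) + (wlen T hex (π h) : ℝ)
      rw [map_mul]
      exact_mod_cast wlen_mul T hex (π g) (π h)
    · intro h hh
      show (wlen T hex (π h) : ℝ) = 0
      rw [hπH h hh, wlen_one T hex]
      norm_num
  refine ⟨L, hLH, ?_⟩
  set m : ℕ := T.card with hm
  have hCoFin : (Co : Set G).Finite := Set.toFinite _
  refine ⟨Polynomial.C ((hCoFin.toFinset.card : ℝ)) * (2 * Polynomial.X + 3) ^ m, ?_⟩
  intro r hr f k hf0 hbi hFD hfr hk0 hkinv hk2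
  -- coset helpers
  have coset_eq : ∀ (x y : RCos H), y.out * x.out⁻¹ ∈ H → x = y := by
    intro x y h
    have h1 : (QuotientGroup.rightRel H) x.out y.out := QuotientGroup.rightRel_apply.mpr h
    have h2 : (Quotient.mk'' x.out : RCos H) = Quotient.mk'' y.out := Quotient.sound' h1
    rw [Quotient.out_eq', Quotient.out_eq'] at h2
    exact h2
  have out_mk : ∀ g : G, ∃ h ∈ H, (Quotient.mk'' g : RCos H).out = h * g := by
    intro g
    have h1 := Quotient.mk_out' (s₁ := QuotientGroup.rightRel H) g
    rw [QuotientGroup.rightRel_apply] at h1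
    refine ⟨(Quotient.mk'' g : RCos H).out * g⁻¹, ?_, by group⟩
    have h2 : ((Quotient.mk'' g : RCos H).out * g⁻¹)
        = (g * ((Quotient.mk'' g : RCos H).out)⁻¹)⁻¹ := by group
    rw [h2]
    exact H.inv_mem h1
  have fout : ∀ g : G, f ((Quotient.mk'' g : RCos H).out) = f g := by
    intro g
    obtain ⟨h, hh, he⟩ := out_mk g
    rw [he]
    have h1 := hbi g h hh 1 H.one_mem
    simpa using h1
  have Lout : ∀ g : G, L ((Quotient.mk'' g : RCos H).out) = L g := by
    intro g
    obtain ⟨h, hh, he⟩ := out_mk g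
    rw [he]
    show (wlen T hex (π (h * g)) : ℝ) = (wlen T hex (π g) : ℝ)
    rw [map_mul, hπH h hh, one_mul]
  have Lsymm : ∀ u v : G, L (u * v⁻¹) = L (v * u⁻¹) := by
    intro u v
    have h1 : π (u * v⁻¹) = (π (v * u⁻¹))⁻¹ := by
      rw [← map_inv]
      congr 1
      group
    show (wlen T hex (π (u * v⁻¹)) : ℝ) = (wlen T hex (π (v * u⁻¹)) : ℝ)
    rw [h1, wlen_inv T hex]
  set n : ℕ := ⌈r⌉₊ with hn
  set Ball : Set (RCos H) := {z : RCos H | L z.out ≤ r} with hBall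
  have hballq : ∀ z ∈ Ball, π z.out ∈ uball T n := by
    intro z hz
    have h1 : (wlen T hex (π z.out) : ℝ) ≤ (n : ℝ) := le_trans hz (Nat.le_ceil r)
    have h2 : wlen T hex (π z.out) ≤ n := by exact_mod_cast h1
    exact uball_mono T h2 (wlen_spec T hex _)
  choose sec hsec using QuotientGroup.mk'_surjective N
  have hdec : ∀ z : RCos H, ∃ a c : G, a ∈ H ∧ c ∈ Co ∧
      z.out * (sec (π z.out))⁻¹ = a * c := by
    intro z
    have hker : z.out * (sec (π z.out))⁻¹ ∈ N := by
      have h1 : π (z.out * (sec (π z.out))⁻¹) = 1 := by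
        rw [map_mul, map_inv, hsec]
        group
      exact (QuotientGroup.eq_one_iff _).mp h1
    have h2 : z.out * (sec (π z.out))⁻¹ ∈ (H : Set G) * (Co : Set G) := by
      rw [← Subgroup.mul_normal H Co]
      exact hker
    obtain ⟨a, ha, c, hc, hac⟩ := h2
    exact ⟨a, c, ha, hc, hac.symm⟩
  choose dH dC hdH hdC hdEq using hdec
  have hΦinj : Function.Injective (fun z : RCos H => ((π z.out, dC z) : (G ⧸ N) × G)) := by
    intro z₁ z₂ hz
    rw [Prod.mk.injEq] at hz
    obtain ⟨hq, hc⟩ := hz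
    have e₁ : z₁.out = dH z₁ * dC z₁ * sec (π z₁.out) := mul_inv_eq_iff_eq_mul.mp (hdEq z₁)
    have e₂ : z₂.out = dH z₂ * dC z₂ * sec (π z₂.out) := mul_inv_eq_iff_eq_mul.mp (hdEq z₂)
    have h3 : z₂.out * z₁.out⁻¹ = dH z₂ * (dH z₁)⁻¹ := by
      calc z₂.out * z₁.out⁻¹
          = (dH z₂ * dC z₂ * sec (π z₂.out)) * (dH z₁ * dC z₁ * sec (π z₁.out))⁻¹ := by
            rw [← e₁, ← e₂]
        _ = (dH z₂ * dC z₂ * sec (π z₂.out)) * (dH z₁ * dC z₂ * sec (π z₂.out))⁻¹ := by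
            rw [← hq, ← hc]
        _ = dH z₂ * (dH z₁)⁻¹ := by group
    exact coset_eq z₁ z₂ (h3 ▸ H.mul_mem (hdH z₂) (H.inv_mem (hdH z₁)))
  have hBallFin : Ball.Finite := by
    have htarget : ((((uball T n) : Finset (G ⧸ N)) : Set (G ⧸ N)) ×ˢ (Co : Set G)).Finite :=
      Set.Finite.prod (Finset.finite_toSet _) hCoFin
    apply Set.Finite.subset (Set.Finite.preimage hΦinj.injOn htarget)
    intro z hz
    exact ⟨hballq z hz, hdC z⟩
  set BallF : Finset (RCos H) := hBallFin.toFinset with hBF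
  set M : ℕ := BallF.card with hMdef
  have hMbound : (M : ℝ) ≤ (hCoFin.toFinset.card : ℝ) * (2*r+3)^m := by
    have h1 : M ≤ (uball T n).card * hCoFin.toFinset.card := by
      have h2 : M ≤ ((uball T n) ×ˢ hCoFin.toFinset).card := by
        apply Finset.card_le_card_of_injOn (fun z => ((π z.out, dC z) : (G ⧸ N) × G))
        · intro z hz
          rw [hBF, Finset.mem_coe, Set.Finite.mem_toFinset] at hz
          rw [Finset.mem_coe, Finset.mem_product]
          exact ⟨hballq z hz, (Set.Finite.mem_toFinset hCoFin).mpr (hdC z)⟩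
        · exact hΦinj.injOn
      rwa [Finset.card_product] at h2
    have h3 : ((uball T n).card : ℝ) ≤ (2*r+3)^m := by
      have h4 : (uball T n).card ≤ (2*n+1)^m := uball_card T n
      have h5 : ((2*n+1 : ℕ) : ℝ) ≤ 2*r+3 := by
        have h6 : (n : ℝ) < r + 1 := Nat.ceil_lt_add_one hr.le
        push_cast
        linarith
      calc ((uball T n).card : ℝ) ≤ ((2*n+1 : ℕ) : ℝ)^m := by exact_mod_cast h4
        _ ≤ (2*r+3)^m := pow_le_pow_left₀ (by positivity) h5 m
    calc (M : ℝ) ≤ ((uball T n).card : ℝ) * (hCoFin.toFinset.card : ℝ) := by exact_mod_cast h1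
      _ ≤ (2*r+3)^m * (hCoFin.toFinset.card : ℝ) := by
          apply mul_le_mul_of_nonneg_right h3 (Nat.cast_nonneg _)
      _ = (hCoFin.toFinset.card : ℝ) * (2*r+3)^m := by ring
  have memBallF : ∀ w : G, L w ≤ r → (Quotient.mk'' w : RCos H) ∈ BallF := by
    intro w hw
    rw [hBF, Set.Finite.mem_toFinset]
    show L (Quotient.mk'' w : RCos H).out ≤ r
    rw [Lout]
    exact hw
  have hinj2 : ∀ v : G,
      Function.Injective (fun x : RCos H => (Quotient.mk'' (x.out * v) : RCos H)) := by
    intro v x₁ x₂ hx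
    have h1 := Quotient.exact' hx
    rw [QuotientGroup.rightRel_apply] at h1
    have h2 : (x₂.out * v) * (x₁.out * v)⁻¹ = x₂.out * x₁.out⁻¹ := by group
    rw [h2] at h1
    exact coset_eq x₁ x₂ h1
  have hfle : ∀ w : G, f w ≤ l2 H f := by
    have hFsum : Summable (fun z : RCos H => f z.out ^ 2) := by
      apply summable_of_ne_finset_zero (s := BallF)
      intro z hz
      have h1 : f z.out = 0 := by
        by_contra h
        exact hz ((Set.Finite.mem_toFinset hBallFin).mpr (hfr _ h))
      rw [h1]
      ring
    intro w
    have h1 : f w = f ((Quotient.mk'' w : RCos H).out) := (fout w).symm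
    have h2 : f ((Quotient.mk'' w : RCos H).out) ^2 ≤ ∑' z : RCos H, f z.out ^2 :=
      Summable.le_tsum hFsum _ (fun j _ => sq_nonneg _)
    rw [h1, ← Real.sqrt_sq (hf0 _)]
    exact Real.sqrt_le_sqrt h2
  have hl2f_nonneg : 0 ≤ l2 H f := Real.sqrt_nonneg _
  have hl2k_nonneg : 0 ≤ l2 H k := Real.sqrt_nonneg _
  -- row finiteness
  have hrowfin : ∀ y : RCos H, {x : RCos H | f (y.out * x.out⁻¹) ≠ 0}.Finite := by
    intro y
    apply Set.Finite.subset (Set.Finite.preimage (hinj2 y.out⁻¹).injOn BallF.finite_toSet)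
    intro x hx
    show (Quotient.mk'' (x.out * y.out⁻¹) : RCos H) ∈ (BallF : Set (RCos H))
    apply memBallF
    rw [Lsymm]
    exact hfr _ hx
  have hrowmem : ∀ (y x : RCos H), f (y.out * x.out⁻¹) ≠ 0 →
      (Quotient.mk'' (x.out * y.out⁻¹) : RCos H) ∈ BallF := by
    intro y x hx
    apply memBallF
    rw [Lsymm]
    exact hfr _ hx
  have hrowcard : ∀ y : RCos H, (hrowfin y).toFinset.card ≤ M := by
    intro y
    apply Finset.card_le_card_of_injOn (fun x : RCos H => (Quotient.mk'' (x.out * y.out⁻¹) : RCos H))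
    · intro x hx
      rw [Finset.mem_coe, Set.Finite.mem_toFinset] at hx
      exact hrowmem y x hx
    · exact (hinj2 _).injOn
  -- column finiteness
  have hcolfin : ∀ x : RCos H, {y : RCos H | f (y.out * x.out⁻¹) ≠ 0}.Finite := by
    intro x
    apply Set.Finite.subset (Set.Finite.preimage (hinj2 x.out⁻¹).injOn BallF.finite_toSet)
    intro y hy
    show (Quotient.mk'' (y.out * x.out⁻¹) : RCos H) ∈ (BallF : Set (RCos H))
    exact memBallF _ (hfr _ hy)
  have hcolcard : ∀ x : RCos H, (hcolfin x).toFinset.card ≤ M := by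
    intro x
    apply Finset.card_le_card_of_injOn (fun y : RCos H => (Quotient.mk'' (y.out * x.out⁻¹) : RCos H))
    · intro y hy
      rw [Finset.mem_coe, Set.Finite.mem_toFinset] at hy
      exact memBallF _ (hfr _ hy)
    · exact (hinj2 _).injOn
  -- row sums
  have hrow_zero : ∀ (y : RCos H) (x : RCos H), x ∉ (hrowfin y).toFinset →
      f (y.out * x.out⁻¹) = 0 := by
    intro y x hx
    rw [Set.Finite.mem_toFinset] at hx
    simpa using hx
  have hrow_bound : ∀ y : RCos H,
      (∑ x ∈ (hrowfin y).toFinset, f (y.out * x.out⁻¹)) ≤ (M : ℝ) * l2 H f := by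
    intro y
    calc (∑ x ∈ (hrowfin y).toFinset, f (y.out * x.out⁻¹))
        ≤ ∑ _x ∈ (hrowfin y).toFinset, l2 H f := Finset.sum_le_sum (fun x _ => hfle _)
      _ = ((hrowfin y).toFinset.card : ℝ) * l2 H f := by
          rw [Finset.sum_const, nsmul_eq_mul]
      _ ≤ (M : ℝ) * l2 H f := by
          apply mul_le_mul_of_nonneg_right _ hl2f_nonneg
          exact_mod_cast hrowcard y
  have hcol_zero : ∀ (x : RCos H) (y : RCos H), y ∉ (hcolfin x).toFinset →
      f (y.out * x.out⁻¹) = 0 := by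
    intro x y hy
    rw [Set.Finite.mem_toFinset] at hy
    simpa using hy
  have hcol_bound : ∀ x : RCos H,
      (∑ y ∈ (hcolfin x).toFinset, f (y.out * x.out⁻¹)) ≤ (M : ℝ) * l2 H f := by
    intro x
    calc (∑ y ∈ (hcolfin x).toFinset, f (y.out * x.out⁻¹))
        ≤ ∑ _y ∈ (hcolfin x).toFinset, l2 H f := Finset.sum_le_sum (fun y _ => hfle _)
      _ = ((hcolfin x).toFinset.card : ℝ) * l2 H f := by
          rw [Finset.sum_const, nsmul_eq_mul]
      _ ≤ (M : ℝ) * l2 H f := by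
          apply mul_le_mul_of_nonneg_right _ hl2f_nonneg
          exact_mod_cast hcolcard x
  -- convolution value
  have hconv_eq : ∀ y : RCos H, conv H f k y.out
      = ∑ x ∈ (hrowfin y).toFinset, f (y.out * x.out⁻¹) * k x.out := by
    intro y
    show (∑' x : RCos H, f (y.out * x.out⁻¹) * k x.out) = _
    apply tsum_eq_sum
    intro x hx
    rw [hrow_zero y x hx, zero_mul]
  -- Cauchy-Schwarz per row
  have hCS : ∀ y : RCos H, conv H f k y.out ^2
      ≤ ((M:ℝ) * l2 H f) * ∑' x : RCos H, f (y.out * x.out⁻¹) * k x.out ^2 := by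
    intro y
    have hrhoeq : (∑' x : RCos H, f (y.out * x.out⁻¹) * k x.out ^2)
        = ∑ x ∈ (hrowfin y).toFinset, f (y.out * x.out⁻¹) * k x.out ^2 := by
      apply tsum_eq_sum
      intro x hx
      rw [hrow_zero y x hx, zero_mul]
    rw [hconv_eq y, hrhoeq]
    set s := (hrowfin y).toFinset with hs
    have cs := Finset.sum_mul_sq_le_sq_mul_sq s
      (fun x => Real.sqrt (f (y.out * x.out⁻¹)))
      (fun x => Real.sqrt (f (y.out * x.out⁻¹)) * k x.out)
    have e1 : (∑ x ∈ s, Real.sqrt (f (y.out * x.out⁻¹))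
        * (Real.sqrt (f (y.out * x.out⁻¹)) * k x.out))
        = ∑ x ∈ s, f (y.out * x.out⁻¹) * k x.out := by
      apply Finset.sum_congr rfl
      intro x _
      rw [← mul_assoc, Real.mul_self_sqrt (hf0 _)]
    have e2 : (∑ x ∈ s, Real.sqrt (f (y.out * x.out⁻¹)) ^2)
        = ∑ x ∈ s, f (y.out * x.out⁻¹) := by
      apply Finset.sum_congr rfl
      intro x _
      rw [Real.sq_sqrt (hf0 _)]
    have e3 : (∑ x ∈ s, (Real.sqrt (f (y.out * x.out⁻¹)) * k x.out)^2)
        = ∑ x ∈ s, f (y.out * x.out⁻¹) * k x.out ^2 := by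
      apply Finset.sum_congr rfl
      intro x _
      rw [mul_pow, Real.sq_sqrt (hf0 _)]
    rw [e1, e2, e3] at cs
    refine le_trans cs ?_
    apply mul_le_mul_of_nonneg_right (hrow_bound y)
    exact Finset.sum_nonneg (fun x _ => mul_nonneg (hf0 _) (sq_nonneg _))
  -- summability of the double sum
  have hcol_sum : ∀ x : RCos H, Summable (fun y : RCos H => f (y.out * x.out⁻¹) * k x.out ^2) := by
    intro x
    apply summable_of_ne_finset_zero (s := (hcolfin x).toFinset)
    intro y hy
    rw [hcol_zero x y hy, zero_mul]
  have hcol_val : ∀ x : RCos H, (∑' y : RCos H, f (y.out * x.out⁻¹) * k x.out ^2)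
      ≤ ((M:ℝ) * l2 H f) * k x.out ^2 := by
    intro x
    have h1 : (∑' y : RCos H, f (y.out * x.out⁻¹) * k x.out ^2)
        = ∑ y ∈ (hcolfin x).toFinset, f (y.out * x.out⁻¹) * k x.out ^2 := by
      apply tsum_eq_sum
      intro y hy
      rw [hcol_zero x y hy, zero_mul]
    rw [h1, ← Finset.sum_mul]
    exact mul_le_mul_of_nonneg_right (hcol_bound x) (sq_nonneg _)
  have hg2nn : ∀ p : RCos H × RCos H, 0 ≤ f (p.2.out * p.1.out⁻¹) * k p.1.out ^2 :=
    fun p => mul_nonneg (hf0 _) (sq_nonneg _)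
  have hg2sum : Summable (fun p : RCos H × RCos H => f (p.2.out * p.1.out⁻¹) * k p.1.out ^2) := by
    rw [summable_prod_of_nonneg hg2nn]
    constructor
    · intro x
      exact hcol_sum x
    · apply Summable.of_nonneg_of_le
        (fun x => tsum_nonneg (fun y => mul_nonneg (hf0 _) (sq_nonneg _)))
        (fun x => hcol_val x)
      exact hk2.mul_left _
  have hrow_sum : ∀ y : RCos H, Summable (fun x : RCos H => f (y.out * x.out⁻¹) * k x.out ^2) := by
    intro y
    apply summable_of_ne_finset_zero (s := (hrowfin y).toFinset)
    intro x hx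
    rw [hrow_zero y x hx, zero_mul]
  have hswapsum : Summable (fun p : RCos H × RCos H => f (p.1.out * p.2.out⁻¹) * k p.2.out ^ 2) := by
    have h1 := hg2sum.prod_symm
    simpa using h1
  have hrho : HasSum (fun y : RCos H => ∑' x : RCos H, f (y.out * x.out⁻¹) * k x.out ^2)
      (∑' p : RCos H × RCos H, f (p.1.out * p.2.out⁻¹) * k p.2.out ^2) := by
    apply HasSum.prod_fiberwise hswapsum.hasSum
    intro y
    exact (hrow_sum y).hasSum
  have hrhosum : Summable (fun y : RCos H => ∑' x : RCos H, f (y.out * x.out⁻¹) * k x.out ^2) :=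
    ⟨_, hrho⟩
  have hSrho : (∑' y : RCos H, ∑' x : RCos H, f (y.out * x.out⁻¹) * k x.out ^2)
      ≤ ((M:ℝ) * l2 H f) * l2 H k ^2 := by
    rw [hrho.tsum_eq]
    have hswap_eq : (∑' p : RCos H × RCos H, f (p.1.out * p.2.out⁻¹) * k p.2.out ^2)
        = ∑' p : RCos H × RCos H, f (p.2.out * p.1.out⁻¹) * k p.1.out ^2 :=
      (Equiv.prodComm (RCos H) (RCos H)).tsum_eq
        (fun p : RCos H × RCos H => f (p.2.out * p.1.out⁻¹) * k p.1.out ^2)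
    rw [hswap_eq, Summable.tsum_prod' hg2sum hcol_sum]
    calc (∑' x : RCos H, ∑' y : RCos H, f (y.out * x.out⁻¹) * k x.out ^2)
        ≤ ∑' x : RCos H, ((M:ℝ) * l2 H f) * k x.out ^2 := by
          apply Summable.tsum_le_tsum hcol_val ?_ (hk2.mul_left _)
          exact ((summable_prod_of_nonneg hg2nn).mp hg2sum).2
      _ = ((M:ℝ) * l2 H f) * ∑' x : RCos H, k x.out ^2 := tsum_mul_left
      _ = ((M:ℝ) * l2 H f) * l2 H k ^2 := by
          have hl2ksq : l2 H k ^2 = ∑' x : RCos H, k x.out ^2 := by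
            rw [l2]
            exact Real.sq_sqrt (tsum_nonneg fun _ => sq_nonneg _)
          rw [hl2ksq]
  have hconvsum : Summable (fun y : RCos H => conv H f k y.out ^2) :=
    Summable.of_nonneg_of_le (fun y => sq_nonneg _) hCS (hrhosum.mul_left _)
  have hfinal : l2 H (conv H f k) ≤ (M:ℝ) * l2 H f * l2 H k := by
    have h1 : (∑' y : RCos H, conv H f k y.out ^2) ≤ ((M:ℝ) * l2 H f * l2 H k)^2 := by
      calc (∑' y : RCos H, conv H f k y.out ^2)
          ≤ ∑' y : RCos H, ((M:ℝ) * l2 H f) * ∑' x : RCos H, f (y.out * x.out⁻¹) * k x.out ^2 :=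
            Summable.tsum_le_tsum hCS hconvsum (hrhosum.mul_left _)
        _ = ((M:ℝ) * l2 H f) * ∑' y : RCos H, ∑' x : RCos H, f (y.out * x.out⁻¹) * k x.out ^2 :=
            tsum_mul_left
        _ ≤ ((M:ℝ) * l2 H f) * (((M:ℝ) * l2 H f) * l2 H k ^2) :=
            mul_le_mul_of_nonneg_left hSrho (mul_nonneg (Nat.cast_nonneg M) hl2f_nonneg)
        _ = ((M:ℝ) * l2 H f * l2 H k)^2 := by ring
    rw [l2]
    calc Real.sqrt (∑' y : RCos H, conv H f k y.out ^2)
        ≤ Real.sqrt (((M:ℝ) * l2 H f * l2 H k)^2) := Real.sqrt_le_sqrt h1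
      _ = (M:ℝ) * l2 H f * l2 H k :=
          Real.sqrt_sq (mul_nonneg (mul_nonneg (Nat.cast_nonneg M) hl2f_nonneg) hl2k_nonneg)
  refine le_trans hfinal ?_
  have hPev : Polynomial.eval r (Polynomial.C ((hCoFin.toFinset.card : ℝ))
      * (2 * Polynomial.X + 3) ^ m) = (hCoFin.toFinset.card : ℝ) * (2*r+3)^m := by
    simp
  rw [hPev]
  apply mul_le_mul_of_nonneg_right (mul_le_mul_of_nonneg_right hMbound hl2f_nonneg) hl2k_nonneg

open HeckeRDPaper in
/-- If `G` is a finitely generated group with finite commutator subgroup,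
then every subgroup `H` is almost normal and the Hecke pair `(G,H)` has (RD). -/
theorem stmt5 {G : Type*} [Group G] (hfg : Group.FG G)
    (hfin : Finite (commutator G)) (H : Subgroup G) :
    AlmostNormal H ∧ HeckeRD H := by
  exact ⟨stmtA hfin H, stmtB hfg hfin H⟩
end
end

section
/- Let φ : G₁ → G₂ be a group homomorphism whose kernel is finite, and let H₂ be an almost normal subgroup of G₂ contained in the image φ(G₁). Then H₁ := φ⁻¹(H₂) is an almost normal subgroup of G₁, and if the Hecke pair (G₂,H₂) has property (RD) with respect to a length function L₂, then the Hecke pair (G₁,H₁) has property (RD) with respect to the length function L₁ = L₂∘φ. -/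
noncomputable section

section Stmt7Aux

open HeckeRDPaper

variable {G₁ G₂ : Type*} [Group G₁] [Group G₂] (φ : G₁ →* G₂) {H₂ : Subgroup G₂}

open scoped Classical in
/-- Push a function forward along `φ`, extending by zero off the range. -/
private def push (f : G₁ → ℝ) : G₂ → ℝ :=
  fun y => if h : ∃ g, φ g = y then f h.choose else 0

private lemma push_zero {f : G₁ → ℝ} {y : G₂} (hy : y ∉ Set.range φ) :
    push φ f y = 0 := dif_neg hy

private lemma push_apply {f : G₁ → ℝ}
    (hf : ∀ g : G₁, ∀ h ∈ H₂.comap φ, f (h * g) = f g) (g : G₁) :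
    push φ f (φ g) = f g := by
  have h : ∃ g', φ g' = φ g := ⟨g, rfl⟩
  have hc := h.choose_spec
  have hk : h.choose * g⁻¹ ∈ H₂.comap φ := by
    have : φ (h.choose * g⁻¹) = 1 := by rw [map_mul, map_inv, hc, mul_inv_cancel]
    rw [Subgroup.mem_comap, this]; exact one_mem _
  have h2 := hf g _ hk
  rw [inv_mul_cancel_right] at h2
  rw [push, dif_pos h, h2]

private lemma push_left (hrange : (H₂ : Set G₂) ⊆ Set.range φ) {f : G₁ → ℝ}
    (hf : ∀ g : G₁, ∀ h ∈ H₂.comap φ, f (h * g) = f g) :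
    ∀ h ∈ H₂, ∀ y, push φ f (h * y) = push φ f y := by
  intro h hh y
  obtain ⟨m, hm⟩ := hrange hh
  have hmH : m ∈ H₂.comap φ := by rw [Subgroup.mem_comap, hm]; exact hh
  by_cases hy : y ∈ Set.range φ
  · obtain ⟨g, rfl⟩ := hy
    rw [← hm, ← map_mul, push_apply φ hf, push_apply φ hf, hf g m hmH]
  · rw [push_zero φ hy, push_zero φ ?_]
    rintro ⟨g, hg⟩
    exact hy ⟨m⁻¹ * g, by rw [map_mul, map_inv, hm, hg]; simp⟩

private lemma push_right (hrange : (H₂ : Set G₂) ⊆ Set.range φ) {f : G₁ → ℝ}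
    (hfl : ∀ g : G₁, ∀ h ∈ H₂.comap φ, f (h * g) = f g)
    (hfr : ∀ g : G₁, ∀ h ∈ H₂.comap φ, f (g * h) = f g) :
    ∀ h ∈ H₂, ∀ y, push φ f (y * h) = push φ f y := by
  intro h hh y
  obtain ⟨m, hm⟩ := hrange hh
  have hmH : m ∈ H₂.comap φ := by rw [Subgroup.mem_comap, hm]; exact hh
  by_cases hy : y ∈ Set.range φ
  · obtain ⟨g, rfl⟩ := hy
    rw [← hm, ← map_mul, push_apply φ hfl, push_apply φ hfl, hfr g m hmH]
  · rw [push_zero φ hy, push_zero φ ?_]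
    rintro ⟨g, hg⟩
    exact hy ⟨g * m⁻¹, by rw [map_mul, map_inv, hm, hg]; simp⟩

/-- The induced map on right cosets. -/
private def ι : RCos (H₂.comap φ) → RCos H₂ :=
  Quotient.map' φ fun a b hab => by
    rw [QuotientGroup.rightRel_apply] at hab ⊢
    rw [Subgroup.mem_comap] at hab
    simpa using hab

private lemma ι_mk (g : G₁) : ι φ (H₂ := H₂) (Quotient.mk'' g) = Quotient.mk'' (φ g) :=
  rfl

private lemma ι_inj : Function.Injective (ι φ (H₂ := H₂)) := by
  intro a b
  induction a using Quotient.inductionOn' with | h a =>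
  induction b using Quotient.inductionOn' with | h b =>
  intro hab
  rw [ι_mk, ι_mk, Quotient.eq'', QuotientGroup.rightRel_apply] at hab
  rw [Quotient.eq'', QuotientGroup.rightRel_apply, Subgroup.mem_comap]
  simpa using hab

private lemma ι_out (w : RCos (H₂.comap φ)) :
    ∃ h ∈ H₂, (ι φ w).out = h * φ w.out := by
  have h1 : ι φ w = Quotient.mk'' (φ w.out) := by
    conv_lhs => rw [← Quotient.out_eq w]
    exact ι_mk φ w.out
  have h2 : (Quotient.mk'' (ι φ w).out : RCos H₂) = Quotient.mk'' (φ w.out) := by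
    rw [← h1]; exact Quotient.out_eq _
  rw [Quotient.eq'', QuotientGroup.rightRel_apply] at h2
  refine ⟨(φ w.out * (ι φ w).out⁻¹)⁻¹, inv_mem h2, ?_⟩
  group

private lemma mem_range_ι {x : RCos H₂} (hx : x.out ∈ Set.range φ) :
    x ∈ Set.range (ι φ (H₂ := H₂)) := by
  obtain ⟨g, hg⟩ := hx
  refine ⟨Quotient.mk'' g, ?_⟩
  rw [ι_mk, hg]
  exact Quotient.out_eq x

private lemma tsum_transfer (F : G₂ → ℝ)
    (hinv : ∀ h ∈ H₂, ∀ y, F (h * y) = F y)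
    (hz : ∀ y, y ∉ Set.range φ → F y = 0) :
    ∑' x : RCos H₂, F x.out = ∑' w : RCos (H₂.comap φ), F (φ w.out) := by
  have hsupp : Function.support (fun x : RCos H₂ => F x.out) ⊆
      Set.range (ι φ (H₂ := H₂)) := by
    intro x hx
    refine mem_range_ι φ ?_
    by_contra hc
    exact hx (hz _ hc)
  rw [← (ι_inj φ).tsum_eq (f := fun x : RCos H₂ => F x.out) hsupp]
  refine tsum_congr fun w => ?_
  obtain ⟨h, hh, he⟩ := ι_out φ w
  rw [he, hinv h hh]

private lemma summable_transfer (F : G₂ → ℝ)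
    (hinv : ∀ h ∈ H₂, ∀ y, F (h * y) = F y)
    (hz : ∀ y, y ∉ Set.range φ → F y = 0)
    (hs : Summable fun w : RCos (H₂.comap φ) => F (φ w.out)) :
    Summable fun x : RCos H₂ => F x.out := by
  have hzero : ∀ x ∉ Set.range (ι φ (H₂ := H₂)), F (Quotient.out x) = 0 := by
    intro x hx
    refine hz _ fun hc => hx (mem_range_ι φ hc)
  rw [← (ι_inj φ).summable_iff (f := fun x : RCos H₂ => F x.out) hzero]
  have : ((fun x : RCos H₂ => F x.out) ∘ ι φ) = fun w : RCos (H₂.comap φ) => F (φ w.out) := by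
    funext w
    obtain ⟨h, hh, he⟩ := ι_out φ w
    simp only [Function.comp_apply, he, hinv h hh]
  rw [this]
  exact hs

private lemma doset_image (hrange : (H₂ : Set G₂) ⊆ Set.range φ) (g : G₁) :
    {y : G₂ | ∃ h₁ ∈ H₂, ∃ h₂ ∈ H₂, y = h₁ * φ g * h₂} =
      φ '' {y : G₁ | ∃ h₁ ∈ H₂.comap φ, ∃ h₂ ∈ H₂.comap φ, y = h₁ * g * h₂} := by
  ext y
  constructor
  · rintro ⟨h₁, hh₁, h₂, hh₂, rfl⟩
    obtain ⟨m₁, hm₁⟩ := hrange hh₁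
    obtain ⟨m₂, hm₂⟩ := hrange hh₂
    refine ⟨m₁ * g * m₂, ⟨m₁, ?_, m₂, ?_, rfl⟩, by rw [map_mul, map_mul, hm₁, hm₂]⟩
    · rw [Subgroup.mem_comap, hm₁]; exact hh₁
    · rw [Subgroup.mem_comap, hm₂]; exact hh₂
  · rintro ⟨x, ⟨m₁, hm₁, m₂, hm₂, rfl⟩, rfl⟩
    rw [Subgroup.mem_comap] at hm₁ hm₂
    exact ⟨φ m₁, hm₁, φ m₂, hm₂, by rw [map_mul, map_mul]⟩

end Stmt7Aux

open HeckeRDPaper in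
/-- Pulling back (RD) along a homomorphism with finite kernel. -/
theorem stmt7 {G₁ G₂ : Type*} [Group G₁] [Group G₂] (φ : G₁ →* G₂)
    (hker : Finite φ.ker)
    (H₂ : Subgroup G₂) (hH₂ : AlmostNormal H₂)
    (hrange : (H₂ : Set G₂) ⊆ Set.range φ)
    (L₂ : G₂ → ℝ) (hL₂ : IsHeckeLength H₂ L₂) :
    AlmostNormal (H₂.comap φ) ∧
      (HeckeRDwrt H₂ L₂ →
        IsHeckeLength (H₂.comap φ) (L₂ ∘ φ) ∧ HeckeRDwrt (H₂.comap φ) (L₂ ∘ φ)) := by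
  have hle : H₂ ≤ φ.range := fun x hx => MonoidHom.mem_range.mpr (hrange hx)
  constructor
  · -- Almost normality of the preimage
    intro g
    have hconj : conjS g (H₂.comap φ) = (conjS (φ g) H₂).comap φ := by
      ext x
      simp only [conjS, Subgroup.mem_comap, Subgroup.mem_map, MulEquiv.coe_toMonoidHom,
        MulAut.conj_apply]
      constructor
      · rintro ⟨y, hy, rfl⟩
        exact ⟨φ y, hy, by rw [map_mul, map_mul, map_inv]⟩
      · rintro ⟨z, hz, hzx⟩
        refine ⟨g⁻¹ * x * g, ?_, by group⟩
        have : φ (g⁻¹ * x * g) = z := by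
          rw [map_mul, map_mul, map_inv, ← hzx]; group
        rw [this]; exact hz
    rw [hconj, Subgroup.relIndex_comap, Subgroup.map_comap_eq, inf_eq_right.mpr hle]
    exact hH₂ (φ g)
  · intro hRD
    constructor
    · -- the pulled-back length function
      refine ⟨⟨fun g => hL₂.1.nonneg _, ?_, fun g => ?_, fun g h => ?_⟩, fun h hh => ?_⟩
      · show L₂ (φ 1) = 0
        rw [map_one]; exact hL₂.1.map_one
      · show L₂ (φ g⁻¹) = L₂ (φ g)
        rw [map_inv]; exact hL₂.1.map_inv _
      · show L₂ (φ (g * h)) ≤ L₂ (φ g) + L₂ (φ h)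
        rw [map_mul]; exact hL₂.1.subadd _ _
      · exact hL₂.2 _ hh
    · -- property (RD)
      obtain ⟨P, hP⟩ := hRD
      refine ⟨P, ?_⟩
      intro r hr f k hf0 hfbi hffin hfL hk0 hkl hks
      -- left and right invariance of f
      have hfl : ∀ g : G₁, ∀ h ∈ H₂.comap φ, f (h * g) = f g := by
        intro g h hh
        have := hfbi g h hh 1 (one_mem _)
        rwa [mul_one] at this
      have hfr : ∀ g : G₁, ∀ h ∈ H₂.comap φ, f (g * h) = f g := by
        intro g h hh
        have := hfbi g 1 (one_mem _) h hh
        rwa [one_mul] at this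
      have pa_f : ∀ g, push φ f (φ g) = f g := push_apply φ hfl
      have pa_k : ∀ g, push φ k (φ g) = k g := push_apply φ hkl
      have pl_f := push_left φ hrange hfl
      have pr_f := push_right φ hrange hfl hfr
      have pl_k := push_left φ hrange hkl
      -- apply (RD) for (G₂, H₂) to the pushed-forward functions
      have key := hP r hr (push φ f) (push φ k) ?f0 ?fbi ?ffin ?fL ?k0 ?kl ?ks
      case f0 =>
        intro y
        rw [push]
        split
        · exact hf0 _
        · exact le_refl 0
      case fbi =>
        intro y h₁ hh₁ h₂ hh₂
        rw [pr_f h₂ hh₂, pl_f h₁ hh₁]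
      case ffin =>
        refine Set.Finite.subset (hffin.image (fun s => φ '' s)) ?_
        rintro s ⟨y, hy, rfl⟩
        have hyr : y ∈ Set.range φ := by
          by_contra h
          exact hy (push_zero φ h)
        obtain ⟨g, rfl⟩ := hyr
        refine ⟨{x : G₁ | ∃ h₁ ∈ H₂.comap φ, ∃ h₂ ∈ H₂.comap φ, x = h₁ * g * h₂},
          ⟨g, ?_, rfl⟩, (doset_image φ hrange g).symm⟩
        rw [← pa_f g]; exact hy
      case fL =>
        intro y hy
        have hyr : y ∈ Set.range φ := by
          by_contra h
          exact hy (push_zero φ h)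
        obtain ⟨g, rfl⟩ := hyr
        refine hfL g ?_
        rw [← pa_f g]; exact hy
      case k0 =>
        intro y
        rw [push]
        split
        · exact hk0 _
        · exact le_refl 0
      case kl =>
        intro y h hh
        exact pl_k h hh y
      case ks =>
        refine summable_transfer φ (fun y => push φ k y ^ 2) ?_ ?_ ?_
        · intro h hh y; simp only [pl_k h hh y]
        · intro y hy; simp only [push_zero φ hy]; norm_num
        · simpa only [pa_k] using hks
      -- identify the ℓ² norms
      have l2f : l2 H₂ (push φ f) = l2 (H₂.comap φ) f := by
        unfold l2
        rw [tsum_transfer φ (fun y => push φ f y ^ 2)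
          (fun h hh y => by simp only [pl_f h hh y])
          (fun y hy => by simp only [push_zero φ hy]; norm_num)]
        congr 1
        exact tsum_congr fun w => by simp only [pa_f]
      have l2k : l2 H₂ (push φ k) = l2 (H₂.comap φ) k := by
        unfold l2
        rw [tsum_transfer φ (fun y => push φ k y ^ 2)
          (fun h hh y => by simp only [pl_k h hh y])
          (fun y hy => by simp only [push_zero φ hy]; norm_num)]
        congr 1
        exact tsum_congr fun w => by simp only [pa_k]
      have hconv : ∀ g : G₁,
          conv H₂ (push φ f) (push φ k) (φ g) = conv (H₂.comap φ) f k g := by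
        intro g
        unfold conv
        rw [tsum_transfer φ (fun y => push φ f (φ g * y⁻¹) * push φ k y) ?_ ?_]
        · refine tsum_congr fun w => ?_
          show push φ f (φ g * (φ w.out)⁻¹) * push φ k (φ w.out) = f (g * w.out⁻¹) * k w.out
          rw [pa_k, ← map_inv, ← map_mul, pa_f]
        · intro h hh y
          show push φ f (φ g * (h * y)⁻¹) * push φ k (h * y)
              = push φ f (φ g * y⁻¹) * push φ k y
          rw [mul_inv_rev, ← mul_assoc, pr_f h⁻¹ (inv_mem hh), pl_k h hh]
        · intro y hy
          show push φ f (φ g * y⁻¹) * push φ k y = 0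
          rw [push_zero φ hy, mul_zero]
      have hconv0 : ∀ y ∉ Set.range φ, conv H₂ (push φ f) (push φ k) y = 0 := by
        intro y hy
        unfold conv
        have : (fun x : RCos H₂ => push φ f (y * x.out⁻¹) * push φ k x.out)
            = fun _ => (0 : ℝ) := by
          funext x
          by_cases hx : x.out ∈ Set.range φ
          · obtain ⟨m, hm⟩ := hx
            rw [push_zero φ (f := f) ?_, zero_mul]
            rintro ⟨u, hu⟩
            refine hy ⟨u * m, ?_⟩
            rw [map_mul, hu, hm]
            group
          · rw [push_zero φ hx, mul_zero]
        rw [this, tsum_zero]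
      have hconvl : ∀ h ∈ H₂, ∀ y,
          conv H₂ (push φ f) (push φ k) (h * y) = conv H₂ (push φ f) (push φ k) y := by
        intro h hh y
        unfold conv
        exact tsum_congr fun x => by rw [mul_assoc, pl_f h hh]
      have l2c : l2 H₂ (conv H₂ (push φ f) (push φ k))
          = l2 (H₂.comap φ) (conv (H₂.comap φ) f k) := by
        unfold l2
        rw [tsum_transfer φ (fun y => conv H₂ (push φ f) (push φ k) y ^ 2)
          (fun h hh y => by simp only [hconvl h hh]) (fun y hy => by simp only [hconv0 y hy]; norm_num)]
        congr 1
        exact tsum_congr fun w => by simp only [hconv]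
      rw [l2c, l2f, l2k] at key
      exact key
end
end

section
/- Let H be an almost normal subgroup of a group G and let Γ be a subgroup of G containing H. Then H is an almost normal subgroup of Γ, and if the Hecke pair (G,H) has property (RD), then the Hecke pair (Γ,H) has property (RD). -/
noncomputable section

noncomputable section Stmt8Aux
namespace Stmt8Aux
open HeckeRDPaper

variable {G : Type*} [Group G] (H Γ : Subgroup G)

/-- The natural injection of right cosets `H\\Γ → H\\G`. -/
def iot (H Γ : Subgroup G) : RCos (H.subgroupOf Γ) → RCos H :=
  Quotient.map' Subtype.val (fun a b h => by
    rw [QuotientGroup.rightRel_apply] at h ⊢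
    simpa [Subgroup.mem_subgroupOf] using h)

lemma iot_mk (g : Γ) : iot H Γ (Quotient.mk'' g) = Quotient.mk'' (g : G) := rfl

lemma iot_inj : Function.Injective (iot H Γ) := by
  intro a b
  induction a using Quotient.inductionOn' with | h a =>
  induction b using Quotient.inductionOn' with | h b =>
  intro h
  apply Quotient.sound'
  have h2 := Quotient.exact' h
  rw [QuotientGroup.rightRel_apply] at h2 ⊢
  simpa [Subgroup.mem_subgroupOf] using h2

lemma const_on (φ : G → ℝ) (hinv : ∀ g : G, ∀ h ∈ H, φ (h * g) = φ g)
    {a b : G} (hab : QuotientGroup.rightRel H a b) : φ a = φ b := by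
  rw [QuotientGroup.rightRel_apply] at hab
  have : φ (b * a⁻¹ * a) = φ a := hinv a _ hab
  simpa using this.symm

lemma out_rel (x : RCos H) (g : G) (hx : x = Quotient.mk'' g) :
    QuotientGroup.rightRel H x.out g := by
  apply Quotient.exact'
  rw [Quotient.mk''_eq_mk, Quotient.out_eq, hx]

lemma key_tsum (φ : G → ℝ)
    (hinv : ∀ g : G, ∀ h ∈ H, φ (h * g) = φ g)
    (hsupp : ∀ g : G, φ g ≠ 0 → g ∈ Γ) :
    ∑' y : RCos (H.subgroupOf Γ), φ (y.out : G) = ∑' x : RCos H, φ x.out := by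
  have hrange : Function.support (fun x : RCos H => φ x.out) ⊆ Set.range (iot H Γ) := by
    intro x hx
    have hmem : (x.out : G) ∈ Γ := hsupp _ hx
    exact ⟨Quotient.mk'' ⟨x.out, hmem⟩, by rw [iot_mk, Quotient.mk''_eq_mk, Quotient.out_eq]⟩
  have := (iot_inj H Γ).tsum_eq (f := fun x : RCos H => φ x.out) hrange
  rw [← this]
  apply tsum_congr
  intro y
  have : iot H Γ y = Quotient.mk'' (y.out : G) := by
    conv_lhs => rw [← Quotient.out_eq' y]
    rfl
  exact (const_on H φ hinv (out_rel H _ _ this)).symm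

lemma key_summable (φ : G → ℝ)
    (hinv : ∀ g : G, ∀ h ∈ H, φ (h * g) = φ g)
    (hsupp : ∀ g : G, φ g ≠ 0 → g ∈ Γ)
    (hs : Summable (fun y : RCos (H.subgroupOf Γ) => φ (y.out : G))) :
    Summable (fun x : RCos H => φ x.out) := by
  have hrange : ∀ x ∉ Set.range (iot H Γ), (fun x : RCos H => φ x.out) x = 0 := by
    intro x hx
    by_contra h
    have hmem : (x.out : G) ∈ Γ := hsupp _ h
    exact hx ⟨Quotient.mk'' ⟨x.out, hmem⟩, by rw [iot_mk, Quotient.mk''_eq_mk, Quotient.out_eq]⟩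
  rw [← (iot_inj H Γ).summable_iff hrange]
  have : (fun x : RCos H => φ x.out) ∘ (iot H Γ)
      = fun y : RCos (H.subgroupOf Γ) => φ (y.out : G) := by
    funext y
    have : iot H Γ y = Quotient.mk'' (y.out : G) := by
      conv_lhs => rw [← Quotient.out_eq' y]
      rfl
    exact const_on H φ hinv (out_rel H _ _ this)
  rw [this]; exact hs

end Stmt8Aux
end Stmt8Aux

open HeckeRDPaper in
/-- If `H ≤ Γ ≤ G` and `H` is almost normal in `G`, then `H` is almost
normal in `Γ`, and (RD) for `(G,H)` implies (RD) for `(Γ,H)`. -/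
theorem stmt8 {G : Type*} [Group G] (H Γ : Subgroup G)
    (hH : AlmostNormal H) (hle : H ≤ Γ) :
    AlmostNormal (H.subgroupOf Γ) ∧ (HeckeRD H → HeckeRD (H.subgroupOf Γ)) := by
  constructor
  · -- Almost normality
    intro γ
    have hconj : conjS γ (H.subgroupOf Γ) = (conjS (↑γ) H).subgroupOf Γ := by
      ext x
      simp only [conjS, Subgroup.mem_map, Subgroup.mem_subgroupOf,
        MulEquiv.coe_toMonoidHom, MulAut.conj_apply]
      constructor
      · rintro ⟨y, hy, rfl⟩
        exact ⟨(y : G), hy, by push_cast; ring⟩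
      · rintro ⟨z, hz, hzx⟩
        refine ⟨⟨z, hle hz⟩, hz, ?_⟩
        ext
        simpa using hzx
    rw [hconj, Subgroup.relIndex_subgroupOf hle]
    exact hH γ
  · -- property (RD)
    rintro ⟨L, ⟨hLlen, hLH⟩, P, hP⟩
    classical
    refine ⟨fun γ => L ↑γ, ⟨⟨fun g => hLlen.nonneg _, by simpa using hLlen.map_one,
      fun g => hLlen.map_inv _, fun g h => hLlen.subadd _ _⟩,
      fun h hh => hLH _ hh⟩, P, ?_⟩
    intro r hr f k hf0 hfbi hfsupp hfL hk0 hkinv hksum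
    set F : G → ℝ := fun g => if h : g ∈ Γ then f ⟨g, h⟩ else 0 with hFdef
    set K : G → ℝ := fun g => if h : g ∈ Γ then k ⟨g, h⟩ else 0 with hKdef
    have hFΓ : ∀ γ : Γ, F ↑γ = f γ := fun γ => by simp [F]
    have hKΓ : ∀ γ : Γ, K ↑γ = k γ := fun γ => by simp [K]
    have hFsub : ∀ g : G, F g ≠ 0 → g ∈ Γ := by
      intro g hg; by_contra hc; exact hg (dif_neg hc)
    have hKsub : ∀ g : G, K g ≠ 0 → g ∈ Γ := by
      intro g hg; by_contra hc; exact hg (dif_neg hc)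
    have hF0 : ∀ g, 0 ≤ F g := by
      intro g; by_cases hg : g ∈ Γ
      · rw [show F g = f ⟨g, hg⟩ from dif_pos hg]; exact hf0 _
      · rw [show F g = 0 from dif_neg hg]
    have hK0 : ∀ g, 0 ≤ K g := by
      intro g; by_cases hg : g ∈ Γ
      · rw [show K g = k ⟨g, hg⟩ from dif_pos hg]; exact hk0 _
      · rw [show K g = 0 from dif_neg hg]
    have hFbi : ∀ g : G, ∀ h₁ ∈ H, ∀ h₂ ∈ H, F (h₁ * g * h₂) = F g := by
      intro g h₁ hh₁ h₂ hh₂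
      by_cases hg : g ∈ Γ
      · have hmem : h₁ * g * h₂ ∈ Γ := mul_mem (mul_mem (hle hh₁) hg) (hle hh₂)
        rw [show F (h₁ * g * h₂) = f ⟨h₁ * g * h₂, hmem⟩ from dif_pos hmem,
          show F g = f ⟨g, hg⟩ from dif_pos hg]
        exact hfbi ⟨g, hg⟩ ⟨h₁, hle hh₁⟩ (Subgroup.mem_subgroupOf.2 hh₁)
          ⟨h₂, hle hh₂⟩ (Subgroup.mem_subgroupOf.2 hh₂)
      · have hmem : h₁ * g * h₂ ∉ Γ := by
          intro hc
          apply hg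
          have hgeq : g = h₁⁻¹ * (h₁ * g * h₂) * h₂⁻¹ := by group
          rw [hgeq]
          exact mul_mem (mul_mem (inv_mem (hle hh₁)) hc) (inv_mem (hle hh₂))
        rw [show F (h₁ * g * h₂) = 0 from dif_neg hmem, show F g = 0 from dif_neg hg]
    have hKinv : ∀ g : G, ∀ h ∈ H, K (h * g) = K g := by
      intro g h hh
      by_cases hg : g ∈ Γ
      · have hmem : h * g ∈ Γ := mul_mem (hle hh) hg
        rw [show K (h * g) = k ⟨h * g, hmem⟩ from dif_pos hmem,
          show K g = k ⟨g, hg⟩ from dif_pos hg]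
        exact hkinv ⟨g, hg⟩ ⟨h, hle hh⟩ (Subgroup.mem_subgroupOf.2 hh)
      · have hmem : h * g ∉ Γ := by
          intro hc
          exact hg (by simpa using mul_mem (inv_mem (hle hh)) hc)
        rw [show K (h * g) = 0 from dif_neg hmem, show K g = 0 from dif_neg hg]
    -- right invariance and left invariance of F separately
    have hFr : ∀ g : G, ∀ h ∈ H, F (g * h) = F g := by
      intro g h hh
      have := hFbi g 1 (one_mem H) h hh
      simpa using this
    have hFl : ∀ g : G, ∀ h ∈ H, F (h * g) = F g := by
      intro g h hh
      have := hFbi g h hh 1 (one_mem H)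
      simpa using this
    have hFfin : FinDosetSupp H F := by
      have hfin := hfsupp
      unfold FinDosetSupp at hfin ⊢
      have hsubset : {s : Set G | ∃ g : G, F g ≠ 0 ∧
          s = {y : G | ∃ h₁ ∈ H, ∃ h₂ ∈ H, y = h₁ * g * h₂}} ⊆
          (fun t : Set Γ => (Subtype.val '' t)) ''
          {s : Set Γ | ∃ g : Γ, f g ≠ 0 ∧
            s = {y : Γ | ∃ h₁ ∈ H.subgroupOf Γ, ∃ h₂ ∈ H.subgroupOf Γ, y = h₁ * g * h₂}} := by
        rintro s ⟨g, hg, rfl⟩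
        have hgΓ : g ∈ Γ := hFsub g hg
        refine ⟨{y : Γ | ∃ h₁ ∈ H.subgroupOf Γ, ∃ h₂ ∈ H.subgroupOf Γ, y = h₁ * ⟨g, hgΓ⟩ * h₂},
          ⟨⟨g, hgΓ⟩, fun hc => hg (by rw [show F g = f ⟨g, hgΓ⟩ from dif_pos hgΓ]; exact hc), rfl⟩, ?_⟩
        ext y
        constructor
        · rintro ⟨z, ⟨h₁, hh₁, h₂, hh₂, rfl⟩, rfl⟩
          exact ⟨(h₁ : G), Subgroup.mem_subgroupOf.1 hh₁, (h₂ : G),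
            Subgroup.mem_subgroupOf.1 hh₂, rfl⟩
        · rintro ⟨h₁, hh₁, h₂, hh₂, rfl⟩
          exact ⟨⟨h₁, hle hh₁⟩ * ⟨g, hgΓ⟩ * ⟨h₂, hle hh₂⟩,
            ⟨⟨h₁, hle hh₁⟩, Subgroup.mem_subgroupOf.2 hh₁,
             ⟨h₂, hle hh₂⟩, Subgroup.mem_subgroupOf.2 hh₂, rfl⟩, rfl⟩
      exact Set.Finite.subset (Set.Finite.image _ hfin) hsubset
    have hFL : ∀ g : G, F g ≠ 0 → L g ≤ r := by
      intro g hg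
      have hgΓ : g ∈ Γ := hFsub g hg
      have : f ⟨g, hgΓ⟩ ≠ 0 := fun hc => hg (by rw [show F g = f ⟨g, hgΓ⟩ from dif_pos hgΓ]; exact hc)
      exact hfL _ this
    have hKsum : Summable (fun x : RCos H => K x.out ^ 2) := by
      apply Stmt8Aux.key_summable H Γ (fun g => K g ^ 2)
      · intro g h hh; rw [hKinv g h hh]
      · intro g hg
        exact hKsub g (by intro hc; exact hg (by rw [hc]; ring))
      · refine hksum.congr fun y => ?_
        rw [hKΓ]
    have main := hP r hr F K hF0 hFbi hFfin hFL hK0 hKinv hKsum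
    -- pointwise equality of convolutions on Γ
    have hconvΓ : ∀ γ : Γ, conv H F K ↑γ = conv (H.subgroupOf Γ) f k γ := by
      intro γ
      unfold conv
      rw [← Stmt8Aux.key_tsum H Γ (fun g : G => F (↑γ * g⁻¹) * K g)]
      · apply tsum_congr
        intro y
        have h1 : F (↑γ * (↑y.out : G)⁻¹) = f (γ * y.out⁻¹) := by
          rw [show (↑γ * (↑y.out : G)⁻¹) = ((γ * y.out⁻¹ : Γ) : G) by push_cast; ring]
          exact hFΓ _
        rw [h1, hKΓ]
      · intro g h hh
        have h2 : (↑γ * (h * g)⁻¹ : G) = (↑γ * g⁻¹) * h⁻¹ := by group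
        rw [hKinv g h hh, h2, hFr _ _ (inv_mem hh)]
      · intro g hg
        have : K g ≠ 0 := fun hc => hg (by rw [hc]; ring)
        exact hKsub g this
    have hconvinv : ∀ g : G, ∀ h ∈ H, conv H F K (h * g) = conv H F K g := by
      intro g h hh
      unfold conv
      apply tsum_congr
      intro x
      rw [mul_assoc, hFl _ _ hh]
    have hconvsupp : ∀ g : G, conv H F K g ≠ 0 → g ∈ Γ := by
      intro g hg
      by_contra hc
      apply hg
      unfold conv
      have : ∀ x : RCos H, F (g * x.out⁻¹) * K x.out = 0 := by
        intro x
        by_cases hK : K x.out = 0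
        · rw [hK, mul_zero]
        · have hxΓ : x.out ∈ Γ := hKsub _ hK
          have hF : F (g * x.out⁻¹) = 0 := by
            by_contra hF
            have := hFsub _ hF
            exact hc (by simpa using mul_mem this hxΓ)
          rw [hF, zero_mul]
      rw [tsum_congr this, tsum_zero]
    -- l2 identities
    have l2F : l2 H F = l2 (H.subgroupOf Γ) f := by
      unfold l2
      congr 1
      rw [← Stmt8Aux.key_tsum H Γ (fun g : G => F g ^ 2)]
      · exact tsum_congr fun y => by rw [hFΓ]
      · intro g h hh; rw [hFl g h hh]
      · intro g hg; exact hFsub g (fun hc => hg (by rw [hc]; ring))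
    have l2K : l2 H K = l2 (H.subgroupOf Γ) k := by
      unfold l2
      congr 1
      rw [← Stmt8Aux.key_tsum H Γ (fun g : G => K g ^ 2)]
      · exact tsum_congr fun y => by rw [hKΓ]
      · intro g h hh; rw [hKinv g h hh]
      · intro g hg; exact hKsub g (fun hc => hg (by rw [hc]; ring))
    have l2conv : l2 H (conv H F K) = l2 (H.subgroupOf Γ) (conv (H.subgroupOf Γ) f k) := by
      unfold l2
      congr 1
      rw [← Stmt8Aux.key_tsum H Γ (fun g : G => conv H F K g ^ 2)]
      · exact tsum_congr fun y => by rw [hconvΓ]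
      · intro g h hh; rw [hconvinv g h hh]
      · intro g hg; exact hconvsupp g (fun hc => hg (by rw [hc]; ring))
    rw [← l2conv, ← l2F, ← l2K]
    exact main
end
end

section
/- Let H and K be two almost normal subgroups of a group G that are conjugate, i.e., K = gHg⁻¹ for some g ∈ G. Then the Hecke pair (G,H) has property (RD) if and only if the Hecke pair (G,K) has property (RD). -/
noncomputable section

namespace HeckeRDPaper

variable {G : Type*} [Group G] (φ : G ≃* G) (H : Subgroup G)

def rcosEquiv : RCos H ≃ RCos (H.map φ.toMonoidHom) :=
  Quotient.congr φ.toEquiv fun a b => by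
    rw [QuotientGroup.rightRel_apply, QuotientGroup.rightRel_apply]
    constructor
    · intro h
      simpa [← map_mul, ← map_inv] using Subgroup.mem_map_of_mem φ.toMonoidHom h
    · intro h
      have : φ (b * a⁻¹) ∈ Subgroup.map φ.toMonoidHom H := by simpa [map_mul, map_inv] using h
      rwa [Subgroup.mem_map_equiv, MulEquiv.symm_apply_apply] at this

lemma rcosEquiv_rel (x : RCos H) :
    φ x.out * (rcosEquiv φ H x).out⁻¹ ∈ H.map φ.toMonoidHom := by
  have h1 : rcosEquiv φ H x = Quotient.mk _ (φ x.out) := by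
    conv_lhs => rw [← Quotient.out_eq x]
    rfl
  have := Quotient.mk_out (s := QuotientGroup.rightRel (H.map φ.toMonoidHom)) (φ x.out)
  rw [QuotientGroup.rightRel_apply] at this
  rw [h1]
  exact this

lemma invariant_out (F : G → ℝ)
    (hF : ∀ g : G, ∀ h ∈ H.map φ.toMonoidHom, F (h * g) = F g) (x : RCos H) :
    F ((rcosEquiv φ H x).out) = F (φ x.out) := by
  have h := rcosEquiv_rel φ H x
  have := hF (rcosEquiv φ H x).out _ h
  rw [inv_mul_cancel_right] at this
  exact this.symm

lemma tsum_transfer (F : G → ℝ)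
    (hF : ∀ g : G, ∀ h ∈ H.map φ.toMonoidHom, F (h * g) = F g) :
    ∑' y : RCos (H.map φ.toMonoidHom), F y.out = ∑' x : RCos H, F (φ x.out) := by
  rw [← Equiv.tsum_eq (rcosEquiv φ H) (fun y => F y.out)]
  exact tsum_congr fun x => invariant_out φ H F hF x

lemma summable_transfer (F : G → ℝ)
    (hF : ∀ g : G, ∀ h ∈ H.map φ.toMonoidHom, F (h * g) = F g) :
    Summable (fun y : RCos (H.map φ.toMonoidHom) => F y.out) ↔
      Summable (fun x : RCos H => F (φ x.out)) := by
  rw [← Equiv.summable_iff (rcosEquiv φ H)]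
  exact summable_congr fun x => invariant_out φ H F hF x

lemma heckeRDwrt_transfer (L : G → ℝ) (hrd : HeckeRDwrt H L) :
    HeckeRDwrt (H.map φ.toMonoidHom) (L ∘ φ.symm) := by
  set K := H.map φ.toMonoidHom with hKdef
  obtain ⟨P, hP⟩ := hrd
  refine ⟨P, fun r hr f k hf0 hbi hfin hsupp hk0 hkinv hksum => ?_⟩
  -- transported functions
  set f' : G → ℝ := fun y => f (φ y) with hf'
  set k' : G → ℝ := fun y => k (φ y) with hk'
  -- bi-invariance of f' under H
  have hbi' : ∀ g : G, ∀ h₁ ∈ H, ∀ h₂ ∈ H, f' (h₁ * g * h₂) = f' g := by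
    intro g h₁ hh₁ h₂ hh₂
    simp only [hf', map_mul]
    exact hbi (φ g) _ (Subgroup.mem_map_of_mem _ hh₁) _ (Subgroup.mem_map_of_mem _ hh₂)
  -- left invariance of f under K (from bi-invariance)
  have hfleft : ∀ g : G, ∀ h ∈ K, f (h * g) = f g := by
    intro g h hh
    have := hbi g h hh 1 K.one_mem
    simpa using this
  have hfright : ∀ g : G, ∀ h ∈ K, f (g * h) = f g := by
    intro g h hh
    have := hbi g 1 K.one_mem h hh
    simpa using this
  -- finite doset support of f'
  have hfin' : FinDosetSupp H f' := by
    have hinj : Function.Injective (Set.image (⇑φ)) :=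
      Set.image_injective.mpr φ.injective
    refine Set.Finite.subset (hfin.preimage (hinj.injOn)) ?_
    rintro s ⟨g₀, hg₀, rfl⟩
    refine ⟨φ g₀, hg₀, ?_⟩
    ext z
    simp only [Set.mem_image, Set.mem_setOf_eq]
    constructor
    · rintro ⟨y, ⟨h₁, hh₁, h₂, hh₂, rfl⟩, rfl⟩
      exact ⟨φ h₁, Subgroup.mem_map_of_mem _ hh₁, φ h₂, Subgroup.mem_map_of_mem _ hh₂, by
        simp [map_mul]⟩
    · rintro ⟨k₁, hk₁, k₂, hk₂, rfl⟩
      obtain ⟨h₁, hh₁, rfl⟩ := hk₁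
      obtain ⟨h₂, hh₂, rfl⟩ := hk₂
      exact ⟨h₁ * g₀ * h₂, ⟨h₁, hh₁, h₂, hh₂, rfl⟩, by simp [map_mul]⟩
  -- support bound
  have hsupp' : ∀ y, f' y ≠ 0 → L y ≤ r := by
    intro y hy
    have := hsupp (φ y) hy
    simpa using this
  -- left invariance of k'
  have hkinv' : ∀ g : G, ∀ h ∈ H, k' (h * g) = k' g := by
    intro g h hh
    simp only [hk', map_mul]
    exact hkinv (φ g) _ (Subgroup.mem_map_of_mem _ hh)
  -- summability of k'^2
  have hksum' : Summable (fun x : RCos H => k' x.out ^ 2) := by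
    have hF : ∀ g : G, ∀ h ∈ K, (fun z => k z ^ 2) (h * g) = (fun z => k z ^ 2) g := by
      intro g h hh; simp only; rw [hkinv g h hh]
    exact (summable_transfer φ H (fun z => k z ^ 2) hF).mp hksum
  have key := hP r hr f' k' (fun y => hf0 (φ y)) hbi' hfin' hsupp' (fun y => hk0 (φ y))
    hkinv' hksum'
  -- identify the l2 norms
  have hl2f : l2 H f' = l2 K f := by
    unfold l2
    congr 1
    exact (tsum_transfer φ H (fun z => f z ^ 2)
      (fun g h hh => by rw [hfleft g h hh])).symm
  have hl2k : l2 H k' = l2 K k := by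
    unfold l2
    congr 1
    exact (tsum_transfer φ H (fun z => k z ^ 2)
      (fun g h hh => by rw [hkinv g h hh])).symm
  -- conv identification
  have hconv : ∀ y : G, conv H f' k' y = conv K f k (φ y) := by
    intro y
    unfold conv
    have hF : ∀ g : G, ∀ h ∈ K, (fun z => f (φ y * z⁻¹) * k z) (h * g)
        = (fun z => f (φ y * z⁻¹) * k z) g := by
      intro g h hh
      simp only [mul_inv_rev]
      rw [← mul_assoc, hfright _ _ (K.inv_mem hh), hkinv g h hh]
    have := tsum_transfer φ H (fun z => f (φ y * z⁻¹) * k z) hF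
    rw [this]
    exact tsum_congr fun x => by simp [f', k', map_mul, map_inv]
  -- left invariance of conv K f k
  have hconvleft : ∀ g : G, ∀ h ∈ K, conv K f k (h * g) = conv K f k g := by
    intro g h hh
    unfold conv
    exact tsum_congr fun x => by rw [mul_assoc, hfleft _ _ hh]
  have hl2conv : l2 H (conv H f' k') = l2 K (conv K f k) := by
    unfold l2
    congr 1
    have h1 : ∑' x : RCos H, conv H f' k' x.out ^ 2
        = ∑' x : RCos H, conv K f k (φ x.out) ^ 2 :=
      tsum_congr fun x => by rw [hconv]
    rw [h1]
    exact (tsum_transfer φ H (fun z => conv K f k z ^ 2)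
      (fun g h hh => by rw [hconvleft g h hh])).symm
  rw [hl2f, hl2k, hl2conv] at key
  exact key


lemma isHeckeLength_transfer (L : G → ℝ) (h : IsHeckeLength H L) :
    IsHeckeLength (H.map φ.toMonoidHom) (L ∘ φ.symm) := by
  obtain ⟨hL, hvan⟩ := h
  refine ⟨⟨fun g => hL.nonneg _, ?_, fun g => ?_, fun g₁ g₂ => ?_⟩, ?_⟩
  · show L (φ.symm 1) = 0
    rw [map_one]; exact hL.map_one
  · show L (φ.symm g⁻¹) = L (φ.symm g)
    rw [map_inv]; exact hL.map_inv _
  · show L (φ.symm (g₁ * g₂)) ≤ L (φ.symm g₁) + L (φ.symm g₂)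
    rw [map_mul]; exact hL.subadd _ _
  · intro h' hh'
    show L (φ.symm h') = 0
    rw [Subgroup.mem_map_equiv] at hh'
    exact hvan _ hh'

lemma heckeRD_transfer (h : HeckeRD H) : HeckeRD (H.map φ.toMonoidHom) := by
  obtain ⟨L, hL, hrd⟩ := h
  exact ⟨L ∘ φ.symm, isHeckeLength_transfer φ H L hL, heckeRDwrt_transfer φ H L hrd⟩

end HeckeRDPaper

open HeckeRDPaper in
/-- Conjugate almost normal subgroups give Hecke pairs which
simultaneously have or fail (RD). -/
theorem stmt9 {G : Type*} [Group G] (H K : Subgroup G)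
    (hH : AlmostNormal H) (hK : AlmostNormal K)
    (g : G) (hconj : K = conjS g H) :
    HeckeRD H ↔ HeckeRD K := by
  constructor
  · intro h
    rw [hconj]
    exact heckeRD_transfer (MulAut.conj g) H h
  · intro h
    have h2 := heckeRD_transfer (MulAut.conj g⁻¹) K h
    have heq : Subgroup.map (MulAut.conj g⁻¹).toMonoidHom K = H := by
      rw [hconj]
      show Subgroup.map _ (Subgroup.map _ H) = H
      rw [Subgroup.map_map]
      have : (MulAut.conj g⁻¹).toMonoidHom.comp (MulAut.conj g).toMonoidHom
          = MonoidHom.id G := by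
        ext x
        simp [MulAut.conj, mul_assoc]
      rw [this, Subgroup.map_id]
    rwa [heq] at h2
end
end
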